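/- arXiv:math/0404118 — 3 statements merged into one kernel-verified Lean document; each statement's English description precedes it below -/
import Mathlib

section
/- Let G be a group with finite relative presentation ⟨X, H_λ (λ∈Λ) | 𝓡⟩ with respect to {H_λ}_{λ∈Λ}, let Q ≤ G be a subgroup generated by a finite set Y ⊆ X, and let 𝓠, F_Q, γ, Area^rel_Q, and primitive words be as defined. If there exists a constant κ > 0 such that every primitive word W over 𝓠 representing 1 in G satisfies Area^rel_Q(W) ≤ κ‖W‖, then every word W over 𝓠 representing 1 in G satisfies Area^rel_Q(W) ≤ κ‖W‖; in particular, the relative Dehn function of G with respect to {H_λ}_{λ∈Λ} ∪ {Q} is linear. -/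
open Monoid

section RelHypPreamble

variable {G : Type*} [Group G] {ι : Type*}

/-- The alphabet `X ∪ 𝓗`, where `𝓗 = ⊔_λ (H_λ ∖ {1})`. -/
def RelAlphabet (X : Set G) (H : ι → Subgroup G) : Type _ :=
  X ⊕ (Σ i : ι, {h : G // h ∈ H i ∧ h ≠ 1})

/-- The free product `F = (∗_λ H_λ) ∗ F(X)`. -/
abbrev RelFree (X : Set G) (H : ι → Subgroup G) : Type _ :=
  Monoid.Coprod (Monoid.CoprodI (fun i : ι => (H i : Type _))) (FreeGroup X)

/-- The natural homomorphism `F → G`. -/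
noncomputable def relEval (X : Set G) (H : ι → Subgroup G) : RelFree X H →* G :=
  Coprod.lift (CoprodI.lift fun i => (H i).subtype) (FreeGroup.lift fun x => (x : G))

/-- The letter of the alphabet, viewed as an element of `G`. -/
def RelAlphabet.toG {X : Set G} {H : ι → Subgroup G} : RelAlphabet X H → G
  | Sum.inl x => x
  | Sum.inr h => h.2.1

/-- The letter of the alphabet, viewed as an element of the free product `F`. -/
def RelAlphabet.toFree {X : Set G} {H : ι → Subgroup G} : RelAlphabet X H → RelFree X H
  | Sum.inl x => Coprod.inr (FreeGroup.of x)
  | Sum.inr h => Coprod.inl (CoprodI.of (⟨h.2.1, h.2.2.1⟩ : H h.1))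

/-- A word over the alphabet `X ∪ 𝓗`, viewed as an element of the free product `F`. -/
def wordToFree {X : Set G} {H : ι → Subgroup G} (W : List (RelAlphabet X H)) : RelFree X H :=
  (W.map RelAlphabet.toFree).prod

/-- `w` is a product of (at most) `k` conjugates of elements of `R`. -/
def ConjProdLE {K : Type*} [Group K] (R : Set K) (w : K) (k : ℕ) : Prop :=
  ∃ f r : Fin k → K, (∀ i, r i ∈ R) ∧ w = (List.ofFn fun i => (f i)⁻¹ * r i * f i).prod

/-- The relative Dehn function of the presentation with relators `R` is (well defined and)
bounded by a linear function. -/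
def HasLinearRelDehn (X : Set G) (H : ι → Subgroup G) (R : Set (RelFree X H)) : Prop :=
  ∃ C : ℕ, ∀ W : List (RelAlphabet X H), relEval X H (wordToFree W) = 1 →
    ∃ k ≤ C * W.length + C, ConjProdLE R (wordToFree W) k

/-- `G` is hyperbolic relative to `{H_λ}` with finite relative generating set `X`:
`X` is a finite symmetrized relative generating set, and there is a finite set of
relators `R` giving a finite relative presentation whose relative Dehn function is
well defined and linear. -/
def IsRelHyperbolicWith (X : Set G) (H : ι → Subgroup G) : Prop :=
  X.Finite ∧ (∀ x ∈ X, x⁻¹ ∈ X) ∧ Function.Surjective (relEval X H) ∧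
    ∃ R : Set (RelFree X H), R.Finite ∧ (relEval X H).ker = Subgroup.normalClosure R ∧
      HasLinearRelDehn X H R

/-- `G` is hyperbolic relative to the collection of subgroups `{H_λ}`. -/
def IsRelHyperbolic (H : ι → Subgroup G) : Prop :=
  ∃ X : Set G, IsRelHyperbolicWith X H

/-- The word length of `g` with respect to the (symmetrized) generating set `S`. -/
noncomputable def wordLength (S : Set G) (g : G) : ℕ :=
  sInf {n : ℕ | ∃ W : List G, W.length = n ∧ (∀ x ∈ W, x ∈ S ∪ S⁻¹) ∧ W.prod = g}

/-- The relative generating set `X ∪ 𝓗` as a subset of `G`. -/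
def relGenSet (X : Set G) (H : ι → Subgroup G) : Set G :=
  X ∪ ⋃ i : ι, ((H i : Set G) \ {1})

/-- An element is parabolic if it is conjugate to an element of some `H_λ`. -/
def IsParabolic (H : ι → Subgroup G) (g : G) : Prop :=
  ∃ (i : ι) (a : G), a⁻¹ * g * a ∈ H i

/-- A group is elementary if it contains a cyclic subgroup of finite index. -/
def IsElementaryGroup (K : Type*) [Group K] : Prop :=
  ∃ k : K, (Subgroup.zpowers k).FiniteIndex

end RelHypPreamble

section Stmt10

open Monoid Classical

variable {G : Type*} [Group G] {ι : Type*}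

/-- The free product `F_Q = (∗_λ H_λ) ∗ Q ∗ F(Z)`, where `Z = X ∖ Y`. -/
abbrev RelFreeQ (X Y : Set G) (H : ι → Subgroup G) (Q : Subgroup G) : Type _ :=
  Monoid.Coprod (Monoid.Coprod (Monoid.CoprodI (fun i : ι => (H i : Type _))) Q)
    (FreeGroup ((X \ Y : Set G)))

/-- The natural homomorphism `γ : F_Q → G`. -/
noncomputable def relEvalQ (X Y : Set G) (H : ι → Subgroup G) (Q : Subgroup G) :
    RelFreeQ X Y H Q →* G :=
  Coprod.lift
    (Coprod.lift (CoprodI.lift fun i => (H i).subtype) Q.subtype)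
    (FreeGroup.lift fun z => (z : G))

/-- The natural homomorphism `ε : F → F_Q`. -/
noncomputable def epsQ (X Y : Set G) (H : ι → Subgroup G) (Q : Subgroup G)
    (hYQ : Y ⊆ (Q : Set G)) : RelFree X H →* RelFreeQ X Y H Q :=
  Coprod.lift
    (Coprod.inl.comp Coprod.inl)
    (FreeGroup.lift fun x : X =>
      (if hx : (x : G) ∈ Y then Coprod.inl (Coprod.inr (⟨(x : G), hYQ hx⟩ : Q))
       else Coprod.inr (FreeGroup.of (⟨(x : G), x.2, hx⟩ : (X \ Y : Set G)))
        : RelFreeQ X Y H Q))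

/-- The alphabet `𝓠 = X ∪ 𝓗 ⊔ (Q ∖ {1})`. -/
abbrev QAlphabet (X : Set G) (H : ι → Subgroup G) (Q : Subgroup G) : Type _ :=
  RelAlphabet X H ⊕ {q : G // q ∈ Q ∧ q ≠ 1}

/-- A letter of `𝓠`, viewed as an element of `F_Q` (letters of `Y ⊆ X` are read as
elements of `Q`, the remaining letters of `X` as free generators of `F(Z)`). -/
noncomputable def QAlphabet.toFQ {X : Set G} (Y : Set G) {H : ι → Subgroup G}
    {Q : Subgroup G} (hYQ : Y ⊆ (Q : Set G)) : QAlphabet X H Q → RelFreeQ X Y H Q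
  | Sum.inl (Sum.inl x) =>
      if hx : (x : G) ∈ Y then Coprod.inl (Coprod.inr (⟨(x : G), hYQ hx⟩ : Q))
      else Coprod.inr (FreeGroup.of (⟨(x : G), x.2, hx⟩ : (X \ Y : Set G)))
  | Sum.inl (Sum.inr h) =>
      Coprod.inl (Coprod.inl
        (CoprodI.of (M := fun i : ι => (H i : Type _)) (⟨h.2.1, h.2.2.1⟩ : H h.1)))
  | Sum.inr q => Coprod.inl (Coprod.inr (⟨q.1, q.2.1⟩ : Q))

/-- A letter of `𝓠`, viewed as an element of `G`. -/
def QAlphabet.toG {X : Set G} {H : ι → Subgroup G} {Q : Subgroup G} :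
    QAlphabet X H Q → G
  | Sum.inl l => l.toG
  | Sum.inr q => q.1

/-- A word over `𝓠`, viewed as an element of `F_Q`. -/
noncomputable def wordToFQ {X : Set G} (Y : Set G) {H : ι → Subgroup G} {Q : Subgroup G}
    (hYQ : Y ⊆ (Q : Set G)) (W : List (QAlphabet X H Q)) : RelFreeQ X Y H Q :=
  (W.map (QAlphabet.toFQ Y hYQ)).prod

/-- A word `W` over `𝓠` is primitive if it cannot be decomposed as `W₁q₁W₂q₂W₃` with
`q₁, q₂ ∈ Q ∖ {1}` and `W₂` representing an element of `Q` in `G`. -/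
def IsPrimitiveWord {X : Set G} {H : ι → Subgroup G} {Q : Subgroup G}
    (W : List (QAlphabet X H Q)) : Prop :=
  ¬ ∃ (W₁ W₂ W₃ : List (QAlphabet X H Q)) (q₁ q₂ : {q : G // q ∈ Q ∧ q ≠ 1}),
      W = W₁ ++ [(Sum.inr q₁ : QAlphabet X H Q)] ++ W₂ ++ [(Sum.inr q₂ : QAlphabet X H Q)] ++ W₃ ∧
      (W₂.map QAlphabet.toG).prod ∈ Q

section ConjProdAux

variable {K K' : Type*} [Group K] [Group K']

theorem rdConjProdLE_one (R : Set K) : ConjProdLE R 1 0 :=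
  ⟨Fin.elim0, Fin.elim0, fun i => i.elim0, by simp⟩

theorem rdConjProdLE_cons {R : Set K} {w x : K} {k : ℕ} (g r : K) (hr : r ∈ R)
    (hx : x = g⁻¹ * r * g) (h : ConjProdLE R w k) : ConjProdLE R (x * w) (k + 1) := by
  obtain ⟨f, s, hs, rfl⟩ := h
  refine ⟨Fin.cons g f, Fin.cons r s, fun i => ?_, ?_⟩
  · induction i using Fin.cases with
    | zero => simpa using hr
    | succ j => simpa using hs j
  · rw [List.ofFn_succ]
    simp [hx, List.prod_cons]

theorem rdConjProdLE_of_list {R : Set K} (L : List K)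
    (hL : ∀ x ∈ L, ∃ g r, r ∈ R ∧ x = g⁻¹ * r * g) :
    ConjProdLE R L.prod L.length := by
  induction L with
  | nil => simpa using rdConjProdLE_one R
  | cons a t ih =>
    obtain ⟨g, r, hr, ha⟩ := hL a (List.mem_cons_self)
    have h2 := rdConjProdLE_cons g r hr ha (ih fun x hx => hL x (List.mem_cons_of_mem a hx))
    simpa using h2

theorem rdConjProdLE_to_list {R : Set K} {w : K} {k : ℕ} (h : ConjProdLE R w k) :
    ∃ L : List K, L.length = k ∧ (∀ x ∈ L, ∃ g r, r ∈ R ∧ x = g⁻¹ * r * g) ∧ w = L.prod := by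
  obtain ⟨f, r, hr, hw⟩ := h
  refine ⟨_, by simp, fun x hx => ?_, hw⟩
  rw [List.mem_ofFn] at hx
  obtain ⟨i, rfl⟩ := hx
  exact ⟨f i, r i, hr i, rfl⟩

theorem rdConjProdLE_mul {R : Set K} {v w : K} {k l : ℕ}
    (hv : ConjProdLE R v k) (hw : ConjProdLE R w l) : ConjProdLE R (v * w) (k + l) := by
  obtain ⟨L1, hl1, hm1, rfl⟩ := rdConjProdLE_to_list hv
  obtain ⟨L2, hl2, hm2, rfl⟩ := rdConjProdLE_to_list hw
  have h := rdConjProdLE_of_list (R := R) (L1 ++ L2) ?_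
  · rw [List.prod_append] at h
    simpa [hl1, hl2] using h
  · intro x hx
    rcases List.mem_append.mp hx with h | h
    exacts [hm1 x h, hm2 x h]

theorem rdConj_list_prod (g : K) (L : List K) :
    g * L.prod * g⁻¹ = (L.map fun x => g * x * g⁻¹).prod := by
  induction L with
  | nil => simp
  | cons a t ih =>
    simp only [List.map_cons, List.prod_cons, ← ih]
    group

theorem rdConjProdLE_conj {R : Set K} {w : K} {k : ℕ} (g : K)
    (h : ConjProdLE R w k) : ConjProdLE R (g * w * g⁻¹) k := by
  obtain ⟨L, hlen, hm, rfl⟩ := rdConjProdLE_to_list h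
  have hprod := rdConj_list_prod g L
  have h2 := rdConjProdLE_of_list (R := R) (L.map fun x => g * x * g⁻¹) ?_
  · rw [← hprod] at h2
    simpa [hlen] using h2
  · intro x hx
    simp only [List.mem_map] at hx
    obtain ⟨a, ha, rfl⟩ := hx
    obtain ⟨h', r, hr, rfl⟩ := hm a ha
    exact ⟨h' * g⁻¹, r, hr, by group⟩

theorem rdConjProdLE_map {R : Set K} {w : K} {k : ℕ} (φ : K →* K')
    (h : ConjProdLE R w k) : ConjProdLE (⇑φ '' R) (φ w) k := by
  obtain ⟨L, hlen, hm, rfl⟩ := rdConjProdLE_to_list h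
  have h2 := rdConjProdLE_of_list (R := ⇑φ '' R) (L.map ⇑φ) ?_
  · rw [← map_list_prod] at h2
    simpa [hlen] using h2
  · intro x hx
    simp only [List.mem_map] at hx
    obtain ⟨a, ha, rfl⟩ := hx
    obtain ⟨g, r, hr, rfl⟩ := hm a ha
    exact ⟨φ g, φ r, ⟨r, hr, rfl⟩, by simp⟩

theorem rdDecompEq (A B C e1 e2 eq : K) :
    A * e1 * B * e2 * C =
      A * (e1 * (B * eq⁻¹) * e1⁻¹) * A⁻¹ * (A * (e1 * eq * e2) * C) := by
  group

theorem rdCancelEq (a b : K) : a * (a⁻¹ * b) = b := mul_inv_cancel_left a b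

theorem rdConjProdLE_mono {R R' : Set K} {w : K} {k : ℕ} (hRR : R ⊆ R')
    (h : ConjProdLE R w k) : ConjProdLE R' w k := by
  obtain ⟨f, r, hr, hw⟩ := h
  exact ⟨f, r, fun i => hRR (hr i), hw⟩

end ConjProdAux

section WordAux

variable {G : Type*} [Group G] {ι : Type*}
variable {X Y : Set G} {H : ι → Subgroup G} {Q : Subgroup G}

theorem rdRelEval_inl {ι' : Type*} {K : ι' → Subgroup G} {X : Set G} {i : ι'} (x : K i) :
    relEval X K (Coprod.inl (CoprodI.of x)) = x := by
  simp only [relEval]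
  rw [Coprod.lift_apply_inl, CoprodI.lift_of]
  rfl

theorem rdRelEval_inr {ι' : Type*} {K : ι' → Subgroup G} {X : Set G} (x : X) :
    relEval X K (Coprod.inr (FreeGroup.of x)) = x := by
  simp only [relEval]
  rw [Coprod.lift_apply_inr, FreeGroup.lift_apply_of]

theorem rdRelEvalQ_hof {i : ι} (x : H i) :
    relEvalQ X Y H Q (Coprod.inl (Coprod.inl (CoprodI.of x))) = x := by
  simp only [relEvalQ]
  rw [Coprod.lift_apply_inl, Coprod.lift_apply_inl, CoprodI.lift_of]
  rfl

theorem rdRelEvalQ_q (q : Q) :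
    relEvalQ X Y H Q (Coprod.inl (Coprod.inr q)) = q := by
  simp only [relEvalQ]
  rw [Coprod.lift_apply_inl, Coprod.lift_apply_inr]
  rfl

theorem rdRelEvalQ_z (z : (X \ Y : Set G)) :
    relEvalQ X Y H Q (Coprod.inr (FreeGroup.of z)) = z := by
  simp only [relEvalQ]
  rw [Coprod.lift_apply_inr, FreeGroup.lift_apply_of]

theorem rdWordToFQ_append (hYQ : Y ⊆ (Q : Set G)) (W₁ W₂ : List (QAlphabet X H Q)) :
    wordToFQ Y hYQ (W₁ ++ W₂) = wordToFQ Y hYQ W₁ * wordToFQ Y hYQ W₂ := by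
  simp [wordToFQ]

theorem rdWordToFQ_singleton (hYQ : Y ⊆ (Q : Set G)) (l : QAlphabet X H Q) :
    wordToFQ Y hYQ [l] = QAlphabet.toFQ Y hYQ l := by
  simp [wordToFQ]

theorem rdRelEvalQ_toFQ (hYQ : Y ⊆ (Q : Set G)) (l : QAlphabet X H Q) :
    relEvalQ X Y H Q (QAlphabet.toFQ Y hYQ l) = QAlphabet.toG l := by
  rcases l with (x | hh) | q
  · by_cases hx : (x : G) ∈ Y
    · rw [show QAlphabet.toFQ Y hYQ (Sum.inl (Sum.inl x)) =
        (if hx : (x : G) ∈ Y then Coprod.inl (Coprod.inr (⟨(x : G), hYQ hx⟩ : Q))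
         else Coprod.inr (FreeGroup.of (⟨(x : G), x.2, hx⟩ : (X \ Y : Set G)))) from rfl,
        dif_pos hx, rdRelEvalQ_q]
      rfl
    · rw [show QAlphabet.toFQ Y hYQ (Sum.inl (Sum.inl x)) =
        (if hx : (x : G) ∈ Y then Coprod.inl (Coprod.inr (⟨(x : G), hYQ hx⟩ : Q))
         else Coprod.inr (FreeGroup.of (⟨(x : G), x.2, hx⟩ : (X \ Y : Set G)))) from rfl,
        dif_neg hx, rdRelEvalQ_z]
      rfl
  · rw [show QAlphabet.toFQ Y hYQ (Sum.inl (Sum.inr hh)) =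
      Coprod.inl (Coprod.inl (CoprodI.of (M := fun i : ι => (H i : Type _))
        (⟨hh.2.1, hh.2.2.1⟩ : H hh.1))) from rfl, rdRelEvalQ_hof]
    rfl
  · rw [show QAlphabet.toFQ Y hYQ (Sum.inr q) =
      Coprod.inl (Coprod.inr (⟨q.1, q.2.1⟩ : Q)) from rfl, rdRelEvalQ_q]
    rfl

theorem rdRelEvalQ_wordToFQ (hYQ : Y ⊆ (Q : Set G)) (W : List (QAlphabet X H Q)) :
    relEvalQ X Y H Q (wordToFQ Y hYQ W) = (W.map QAlphabet.toG).prod := by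
  induction W with
  | nil => simp [wordToFQ]
  | cons a t ih =>
    have hcons : (a :: t) = [a] ++ t := rfl
    rw [hcons, rdWordToFQ_append, map_mul, ih, rdWordToFQ_singleton, rdRelEvalQ_toFQ]
    simp

/-- The embedding of `Q` into `F_Q`. -/
noncomputable def rdQEmb (X Y : Set G) (H : ι → Subgroup G) (Q : Subgroup G) :
    Q →* RelFreeQ X Y H Q :=
  (Coprod.inl : Monoid.Coprod (Monoid.CoprodI (fun i : ι => (H i : Type _))) Q →*
      RelFreeQ X Y H Q).comp
    (Coprod.inr : Q →* Monoid.Coprod (Monoid.CoprodI (fun i : ι => (H i : Type _))) Q)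

theorem rdQEmb_apply (a : Q) : rdQEmb X Y H Q a = Coprod.inl (Coprod.inr a) := rfl

theorem rdRelEvalQ_qEmb (a : Q) : relEvalQ X Y H Q (rdQEmb X Y H Q a) = a := by
  rw [rdQEmb_apply, rdRelEvalQ_q]

theorem rdExists_q_word (hYQ : Y ⊆ (Q : Set G)) (W : List (QAlphabet X H Q)) (qq : Q) :
    ∃ V : List (QAlphabet X H Q), V.length ≤ W.length + 1 ∧
      wordToFQ Y hYQ V = wordToFQ Y hYQ W * rdQEmb X Y H Q qq := by
  by_cases hq : qq = 1
  · exact ⟨W, Nat.le_succ _, by simp [hq]⟩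
  · have hne : (qq : G) ≠ 1 := fun h => hq (Subtype.ext (by simp [h]))
    refine ⟨W ++ [Sum.inr ⟨(qq : G), qq.2, hne⟩], by simp, ?_⟩
    rw [rdWordToFQ_append, rdWordToFQ_singleton]
    rfl

end WordAux
section OptionAux

variable {G : Type*} [Group G] {ι : Type*}

/-- Component homomorphisms for `π : F' → F_Q`. -/
noncomputable def rdPiFam (H : ι → Subgroup G) (X Y : Set G) (Q : Subgroup G) :
    ∀ o : Option ι, ((o.elim Q H : Subgroup G) : Type _) →* RelFreeQ X Y H Q
  | none => (Coprod.inl : Monoid.Coprod (Monoid.CoprodI (fun i : ι => (H i : Type _))) Q →*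
      RelFreeQ X Y H Q).comp Coprod.inr
  | some i => (Coprod.inl : Monoid.Coprod (Monoid.CoprodI (fun i : ι => (H i : Type _))) Q →*
      RelFreeQ X Y H Q).comp (Coprod.inl.comp
        (CoprodI.of (M := fun i : ι => (H i : Type _)) (i := i)))

theorem rdPiFam_none_apply (H : ι → Subgroup G) (X Y : Set G) (Q : Subgroup G) (x : Q) :
    rdPiFam H X Y Q none x = Coprod.inl (Coprod.inr x) := rfl

theorem rdPiFam_some_apply (H : ι → Subgroup G) (X Y : Set G) (Q : Subgroup G)
    {i : ι} (x : H i) :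
    rdPiFam H X Y Q (some i) x =
      Coprod.inl (Coprod.inl (CoprodI.of (M := fun i : ι => (H i : Type _)) x)) := rfl

/-- The natural homomorphism `π : F' = (∗_o H'_o) ∗ F(X) → F_Q`. -/
noncomputable def rdPiHom (H : ι → Subgroup G) (X Y : Set G) (Q : Subgroup G)
    (hYQ : Y ⊆ (Q : Set G)) :
    RelFree X (fun o : Option ι => o.elim Q H) →* RelFreeQ X Y H Q :=
  Coprod.lift
    (CoprodI.lift (rdPiFam H X Y Q))
    (FreeGroup.lift fun x : X =>
      (if hx : (x : G) ∈ Y then Coprod.inl (Coprod.inr (⟨(x : G), hYQ hx⟩ : Q))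
       else Coprod.inr (FreeGroup.of (⟨(x : G), x.2, hx⟩ : (X \ Y : Set G)))
        : RelFreeQ X Y H Q))

theorem rdPiHom_h (H : ι → Subgroup G) (X Y : Set G) (Q : Subgroup G)
    (hYQ : Y ⊆ (Q : Set G)) {o : Option ι} (x : ((o.elim Q H : Subgroup G) : Type _)) :
    rdPiHom H X Y Q hYQ (Coprod.inl (CoprodI.of x)) = rdPiFam H X Y Q o x := by
  simp only [rdPiHom]
  rw [Coprod.lift_apply_inl, CoprodI.lift_of]

theorem rdPiHom_x (H : ι → Subgroup G) (X Y : Set G) (Q : Subgroup G)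
    (hYQ : Y ⊆ (Q : Set G)) (x : X) :
    rdPiHom H X Y Q hYQ (Coprod.inr (FreeGroup.of x)) =
      (if hx : (x : G) ∈ Y then Coprod.inl (Coprod.inr (⟨(x : G), hYQ hx⟩ : Q))
       else Coprod.inr (FreeGroup.of (⟨(x : G), x.2, hx⟩ : (X \ Y : Set G)))) := by
  simp only [rdPiHom]
  rw [Coprod.lift_apply_inr, FreeGroup.lift_apply_of]

/-- The natural right inverse `σ : F_Q → F'`. -/
noncomputable def rdSigmaHom (H : ι → Subgroup G) (X Y : Set G) (Q : Subgroup G) :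
    RelFreeQ X Y H Q →* RelFree X (fun o : Option ι => o.elim Q H) :=
  Coprod.lift
    (Coprod.lift
      (CoprodI.lift fun i => Coprod.inl.comp
        (CoprodI.of (M := fun o : Option ι => ((o.elim Q H : Subgroup G) : Type _)) (i := some i)))
      (Coprod.inl.comp
        (CoprodI.of (M := fun o : Option ι => ((o.elim Q H : Subgroup G) : Type _)) (i := none))))
    (FreeGroup.lift fun z : (X \ Y : Set G) =>
      (Coprod.inr (FreeGroup.of (⟨z.1, z.2.1⟩ : X)) :
        RelFree X (fun o : Option ι => o.elim Q H)))

theorem rdSigmaHom_h (H : ι → Subgroup G) (X Y : Set G) (Q : Subgroup G) {i : ι} (x : H i) :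
    rdSigmaHom H X Y Q (Coprod.inl (Coprod.inl (CoprodI.of x))) =
      Coprod.inl (CoprodI.of (M := fun o : Option ι => ((o.elim Q H : Subgroup G) : Type _))
        (i := some i) x) := by
  simp only [rdSigmaHom]
  rw [Coprod.lift_apply_inl, Coprod.lift_apply_inl, CoprodI.lift_of]
  rfl

theorem rdSigmaHom_q (H : ι → Subgroup G) (X Y : Set G) (Q : Subgroup G) (q : Q) :
    rdSigmaHom H X Y Q (Coprod.inl (Coprod.inr q)) =
      Coprod.inl (CoprodI.of (M := fun o : Option ι => ((o.elim Q H : Subgroup G) : Type _))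
        (i := none) q) := by
  simp only [rdSigmaHom]
  rw [Coprod.lift_apply_inl, Coprod.lift_apply_inr]
  rfl

theorem rdSigmaHom_z (H : ι → Subgroup G) (X Y : Set G) (Q : Subgroup G)
    (z : (X \ Y : Set G)) :
    rdSigmaHom H X Y Q (Coprod.inr (FreeGroup.of z)) =
      Coprod.inr (FreeGroup.of (⟨z.1, z.2.1⟩ : X)) := by
  simp only [rdSigmaHom]
  rw [Coprod.lift_apply_inr, FreeGroup.lift_apply_of]

theorem rdEpsQ_inl (H : ι → Subgroup G) (X Y : Set G) (Q : Subgroup G)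
    (hYQ : Y ⊆ (Q : Set G)) (m : Monoid.CoprodI (fun i : ι => (H i : Type _))) :
    epsQ X Y H Q hYQ (Coprod.inl m) = Coprod.inl (Coprod.inl m) := by
  simp only [epsQ]
  rw [Coprod.lift_apply_inl]
  rfl

theorem rdEpsQ_x (H : ι → Subgroup G) (X Y : Set G) (Q : Subgroup G)
    (hYQ : Y ⊆ (Q : Set G)) (x : X) :
    epsQ X Y H Q hYQ (Coprod.inr (FreeGroup.of x)) =
      (if hx : (x : G) ∈ Y then Coprod.inl (Coprod.inr (⟨(x : G), hYQ hx⟩ : Q))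
       else Coprod.inr (FreeGroup.of (⟨(x : G), x.2, hx⟩ : (X \ Y : Set G)))) := by
  simp only [epsQ]
  rw [Coprod.lift_apply_inr, FreeGroup.lift_apply_of]

/-- The natural inclusion `ρ : F → F'`. -/
noncomputable def rdRhoHom (H : ι → Subgroup G) (X : Set G) (Q : Subgroup G) :
    RelFree X H →* RelFree X (fun o : Option ι => o.elim Q H) :=
  Coprod.lift
    (Coprod.inl.comp (CoprodI.lift fun i =>
      CoprodI.of (M := fun o : Option ι => ((o.elim Q H : Subgroup G) : Type _)) (i := some i)))
    Coprod.inr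

theorem rdRhoHom_h (H : ι → Subgroup G) (X : Set G) (Q : Subgroup G) {i : ι} (x : H i) :
    rdRhoHom H X Q (Coprod.inl (CoprodI.of x)) =
      Coprod.inl (CoprodI.of (M := fun o : Option ι => ((o.elim Q H : Subgroup G) : Type _))
        (i := some i) x) := by
  simp only [rdRhoHom]
  erw [Coprod.lift_apply_inl, MonoidHom.comp_apply, CoprodI.lift_of]

theorem rdRhoHom_x (H : ι → Subgroup G) (X : Set G) (Q : Subgroup G) (u : FreeGroup X) :
    rdRhoHom H X Q (Coprod.inr u) = Coprod.inr u := by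
  simp only [rdRhoHom]
  rw [Coprod.lift_apply_inr]

theorem rdEvalQ_comp_pi (H : ι → Subgroup G) (X Y : Set G) (Q : Subgroup G)
    (hYQ : Y ⊆ (Q : Set G)) :
    (relEvalQ X Y H Q).comp (rdPiHom H X Y Q hYQ) =
      relEval X (fun o : Option ι => o.elim Q H) := by
  refine Coprod.hom_ext ?_ ?_
  · refine CoprodI.ext_hom _ _ fun o => ?_
    ext x
    simp only [MonoidHom.comp_apply]
    rw [rdPiHom_h, rdRelEval_inl]
    cases o with
    | none => erw [rdPiFam_none_apply, rdRelEvalQ_q]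
    | some i => erw [rdPiFam_some_apply, rdRelEvalQ_hof]
  · refine FreeGroup.ext_hom _ _ fun x => ?_
    simp only [MonoidHom.comp_apply]
    rw [rdPiHom_x, rdRelEval_inr]
    by_cases hx : (x : G) ∈ Y
    · rw [dif_pos hx, rdRelEvalQ_q]
    · rw [dif_neg hx, rdRelEvalQ_z]

theorem rdEvalQ_comp_eps (H : ι → Subgroup G) (X Y : Set G) (Q : Subgroup G)
    (hYQ : Y ⊆ (Q : Set G)) :
    (relEvalQ X Y H Q).comp (epsQ X Y H Q hYQ) = relEval X H := by
  refine Coprod.hom_ext ?_ ?_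
  · refine CoprodI.ext_hom _ _ fun i => ?_
    ext x
    simp only [MonoidHom.comp_apply]
    rw [rdEpsQ_inl, rdRelEvalQ_hof, rdRelEval_inl]
  · refine FreeGroup.ext_hom _ _ fun x => ?_
    simp only [MonoidHom.comp_apply]
    rw [rdEpsQ_x, rdRelEval_inr]
    by_cases hx : (x : G) ∈ Y
    · rw [dif_pos hx, rdRelEvalQ_q]
    · rw [dif_neg hx, rdRelEvalQ_z]

theorem rdEval_comp_rho (H : ι → Subgroup G) (X : Set G) (Q : Subgroup G) :
    (relEval X (fun o : Option ι => o.elim Q H)).comp (rdRhoHom H X Q) = relEval X H := by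
  refine Coprod.hom_ext ?_ ?_
  · refine CoprodI.ext_hom _ _ fun i => ?_
    ext x
    simp only [MonoidHom.comp_apply]
    erw [rdRhoHom_h, rdRelEval_inl]
  · refine FreeGroup.ext_hom _ _ fun x => ?_
    simp only [MonoidHom.comp_apply]
    rw [show rdRhoHom H X Q (Coprod.inr (FreeGroup.of x)) = Coprod.inr (FreeGroup.of x) from
      rdRhoHom_x H X Q (FreeGroup.of x), rdRelEval_inr, rdRelEval_inr]

theorem rdPi_sigma (H : ι → Subgroup G) (X Y : Set G) (Q : Subgroup G)
    (hYQ : Y ⊆ (Q : Set G)) :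
    (rdPiHom H X Y Q hYQ).comp (rdSigmaHom H X Y Q) = MonoidHom.id _ := by
  refine Coprod.hom_ext (Coprod.hom_ext ?_ ?_) ?_
  · refine CoprodI.ext_hom _ _ fun i => ?_
    ext x
    simp only [MonoidHom.comp_apply, MonoidHom.id_apply]
    erw [rdSigmaHom_h, rdPiHom_h, rdPiFam_some_apply]
  · ext x
    simp only [MonoidHom.comp_apply, MonoidHom.id_apply]
    erw [rdSigmaHom_q, rdPiHom_h, rdPiFam_none_apply]
  · refine FreeGroup.ext_hom (M := RelFreeQ X Y H Q) _ _ fun z => ?_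
    simp only [MonoidHom.comp_apply, MonoidHom.id_apply]
    rw [rdSigmaHom_z, rdPiHom_x,
      dif_neg (show ((⟨z.1, z.2.1⟩ : X) : G) ∈ Y → False from z.2.2)]

theorem rdEps_surjective (H : ι → Subgroup G) (X Y : Set G) (Q : Subgroup G)
    (hYX : Y ⊆ X) (hYQ : Y ⊆ (Q : Set G)) (hQgen : Subgroup.closure Y = Q) :
    Function.Surjective (epsQ X Y H Q hYQ) := by
  have himg : ⇑Q.subtype '' {q : Q | (q : G) ∈ Y} = Y := by
    ext g
    constructor
    · rintro ⟨q, hq, rfl⟩; exact hq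
    · intro hg; exact ⟨⟨g, hYQ hg⟩, hg, rfl⟩
  have hY' : Subgroup.closure {q : Q | (q : G) ∈ Y} = ⊤ := by
    apply Subgroup.map_injective Q.subtype_injective
    rw [MonoidHom.map_closure, himg, hQgen, ← MonoidHom.range_eq_map, Subgroup.range_subtype]
  have hQr : ∀ q : Q, (Coprod.inl (Coprod.inr q) : RelFreeQ X Y H Q) ∈ (epsQ X Y H Q hYQ).range := by
    intro q
    have hq : q ∈ Subgroup.closure {q : Q | (q : G) ∈ Y} := by rw [hY']; trivial
    refine Subgroup.closure_induction
      (p := fun x _ => (Coprod.inl (Coprod.inr x) : RelFreeQ X Y H Q) ∈ (epsQ X Y H Q hYQ).range)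
      ?_ ?_ ?_ ?_ hq
    · intro x hx
      refine ⟨Coprod.inr (FreeGroup.of ⟨(x : G), hYX hx⟩), ?_⟩
      rw [rdEpsQ_x, dif_pos (show ((⟨(x : G), hYX hx⟩ : X) : G) ∈ Y from hx)]
    · simpa using one_mem (epsQ X Y H Q hYQ).range
    · intro x y _ _ hx hy
      simpa [map_mul] using mul_mem hx hy
    · intro x _ hx
      simpa [map_inv] using inv_mem hx
  intro w
  suffices h : w ∈ (epsQ X Y H Q hYQ).range from h
  induction w using Coprod.induction_on with
  | inl m =>
    induction m using Coprod.induction_on with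
    | inl m' => exact ⟨Coprod.inl m', rdEpsQ_inl H X Y Q hYQ m'⟩
    | inr q => exact hQr q
    | mul x y hx hy => simpa [map_mul] using mul_mem hx hy
  | inr u =>
    induction u using FreeGroup.induction_on with
    | C1 => simpa using one_mem (epsQ X Y H Q hYQ).range
    | of z =>
      refine ⟨Coprod.inr (FreeGroup.of (⟨z.1, z.2.1⟩ : X)), ?_⟩
      rw [rdEpsQ_x, dif_neg (show ((⟨z.1, z.2.1⟩ : X) : G) ∈ Y → False from z.2.2)]
    | inv_of z hz => simpa [map_inv] using inv_mem hz
    | mul x y hx hy => simpa [map_mul] using mul_mem hx hy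
  | mul x y hx hy => exact mul_mem hx hy

/-- The set of relators identifying the letters of `Y` with elements of `Q`. -/
noncomputable def rdTSet (H : ι → Subgroup G) (X Y : Set G) (Q : Subgroup G)
    (hYX : Y ⊆ X) (hYQ : Y ⊆ (Q : Set G)) :
    Set (RelFree X (fun o : Option ι => o.elim Q H)) :=
  Set.range fun y : Y =>
    (Coprod.inl (CoprodI.of (M := fun o : Option ι => ((o.elim Q H : Subgroup G) : Type _))
      (i := none) (⟨(y : G), hYQ y.2⟩ : Q)))⁻¹ *
      Coprod.inr (FreeGroup.of (⟨(y : G), hYX y.2⟩ : X))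

theorem rdPi_TSet (H : ι → Subgroup G) (X Y : Set G) (Q : Subgroup G)
    (hYX : Y ⊆ X) (hYQ : Y ⊆ (Q : Set G)) :
    ∀ t ∈ rdTSet H X Y Q hYX hYQ, rdPiHom H X Y Q hYQ t = 1 := by
  rintro t ⟨y, rfl⟩
  erw [map_mul, map_inv, rdPiHom_h, rdPiFam_none_apply, rdPiHom_x,
    dif_pos (show ((⟨(y : G), hYX y.2⟩ : X) : G) ∈ Y from y.2)]
  exact inv_mul_cancel _

theorem rdKer_pi (H : ι → Subgroup G) (X Y : Set G) (Q : Subgroup G)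
    (hYX : Y ⊆ X) (hYQ : Y ⊆ (Q : Set G)) :
    (rdPiHom H X Y Q hYQ).ker = Subgroup.normalClosure (rdTSet H X Y Q hYX hYQ) := by
  apply le_antisymm
  · set N := Subgroup.normalClosure (rdTSet H X Y Q hYX hYQ) with hN
    have hτ : ((QuotientGroup.mk' N).comp (rdSigmaHom H X Y Q)).comp (rdPiHom H X Y Q hYQ)
        = QuotientGroup.mk' N := by
      refine Coprod.hom_ext ?_ ?_
      · refine CoprodI.ext_hom _ _ fun o => ?_
        ext x
        simp only [MonoidHom.comp_apply]
        rw [rdPiHom_h]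
        cases o with
        | none => erw [rdPiFam_none_apply, rdSigmaHom_q]
        | some i => erw [rdPiFam_some_apply, rdSigmaHom_h]
      · refine FreeGroup.ext_hom
          (M := RelFree X (fun o : Option ι => o.elim Q H) ⧸ N) _ _ fun x => ?_
        simp only [MonoidHom.comp_apply]
        rw [rdPiHom_x]
        by_cases hx : (x : G) ∈ Y
        · rw [dif_pos hx, rdSigmaHom_q, QuotientGroup.mk'_apply, QuotientGroup.mk'_apply,
            QuotientGroup.eq]
          apply Subgroup.subset_normalClosure
          exact ⟨⟨(x : G), hx⟩, rfl⟩
        · rw [dif_neg hx, rdSigmaHom_z]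
    intro g hg
    have hg1 : rdPiHom H X Y Q hYQ g = 1 := hg
    have h := DFunLike.congr_fun hτ g
    rw [MonoidHom.comp_apply, hg1, map_one] at h
    exact (QuotientGroup.eq_one_iff g).mp (by simpa [QuotientGroup.mk'_apply] using h.symm)
  · apply Subgroup.normalClosure_le_normal
    intro t ht
    exact rdPi_TSet H X Y Q hYX hYQ t ht

/-- Translation of letters. -/
def rdMapL (H : ι → Subgroup G) (X : Set G) (Q : Subgroup G) :
    RelAlphabet X (fun o : Option ι => o.elim Q H) → QAlphabet X H Q
  | Sum.inl x => Sum.inl (Sum.inl x)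
  | Sum.inr ⟨none, hh⟩ => Sum.inr ⟨hh.1, hh.2⟩
  | Sum.inr ⟨some i, hh⟩ => Sum.inl (Sum.inr ⟨i, hh⟩)

theorem rdPi_toFree (H : ι → Subgroup G) (X Y : Set G) (Q : Subgroup G)
    (hYQ : Y ⊆ (Q : Set G)) (l : RelAlphabet X (fun o : Option ι => o.elim Q H)) :
    rdPiHom H X Y Q hYQ (RelAlphabet.toFree l) = QAlphabet.toFQ Y hYQ (rdMapL H X Q l) := by
  rcases l with x | ⟨o, hh⟩
  · rw [show RelAlphabet.toFree (Sum.inl x : RelAlphabet X (fun o : Option ι => o.elim Q H))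
      = Coprod.inr (FreeGroup.of x) from rfl, rdPiHom_x]
    rfl
  · cases o with
    | none =>
      erw [show RelAlphabet.toFree
          (Sum.inr ⟨none, hh⟩ : RelAlphabet X (fun o : Option ι => o.elim Q H))
        = Coprod.inl (CoprodI.of
            (M := fun o : Option ι => ((o.elim Q H : Subgroup G) : Type _)) (i := none)
            (⟨hh.1, hh.2.1⟩ : Q)) from rfl, rdPiHom_h, rdPiFam_none_apply]
      rfl
    | some i =>
      erw [show RelAlphabet.toFree
          (Sum.inr ⟨some i, hh⟩ : RelAlphabet X (fun o : Option ι => o.elim Q H))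
        = Coprod.inl (CoprodI.of
            (M := fun o : Option ι => ((o.elim Q H : Subgroup G) : Type _)) (i := some i)
            (⟨hh.1, hh.2.1⟩ : H i)) from rfl, rdPiHom_h, rdPiFam_some_apply]
      rfl

theorem rdPi_wordToFree (H : ι → Subgroup G) (X Y : Set G) (Q : Subgroup G)
    (hYQ : Y ⊆ (Q : Set G)) (W : List (RelAlphabet X (fun o : Option ι => o.elim Q H))) :
    rdPiHom H X Y Q hYQ (wordToFree W) = wordToFQ Y hYQ (W.map (rdMapL H X Q)) := by
  induction W with
  | nil => simp [wordToFree, wordToFQ]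
  | cons a t ih =>
    have h1 : wordToFree (a :: t) = RelAlphabet.toFree a * wordToFree t := by
      simp [wordToFree]
    have h2 : wordToFQ Y hYQ ((a :: t).map (rdMapL H X Q)) =
        QAlphabet.toFQ Y hYQ (rdMapL H X Q a) * wordToFQ Y hYQ (t.map (rdMapL H X Q)) := by
      simp [wordToFQ]
    rw [h1, map_mul, ih, rdPi_toFree, h2]

theorem rdSigma_pi_letter (H : ι → Subgroup G) (X Y : Set G) (Q : Subgroup G)
    (hYX : Y ⊆ X) (hYQ : Y ⊆ (Q : Set G))
    (l : RelAlphabet X (fun o : Option ι => o.elim Q H)) :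
    rdSigmaHom H X Y Q (rdPiHom H X Y Q hYQ (RelAlphabet.toFree l)) = RelAlphabet.toFree l ∨
    (rdSigmaHom H X Y Q (rdPiHom H X Y Q hYQ (RelAlphabet.toFree l)))⁻¹ * RelAlphabet.toFree l
      ∈ rdTSet H X Y Q hYX hYQ := by
  rcases l with x | ⟨o, hh⟩
  · have htf : RelAlphabet.toFree (Sum.inl x : RelAlphabet X (fun o : Option ι => o.elim Q H))
        = Coprod.inr (FreeGroup.of x) := rfl
    by_cases hx : (x : G) ∈ Y
    · right
      rw [htf, rdPiHom_x, dif_pos hx, rdSigmaHom_q]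
      exact ⟨⟨(x : G), hx⟩, rfl⟩
    · left
      rw [htf, rdPiHom_x, dif_neg hx, rdSigmaHom_z]
  · left
    cases o with
    | none =>
      erw [show RelAlphabet.toFree
          (Sum.inr ⟨none, hh⟩ : RelAlphabet X (fun o : Option ι => o.elim Q H))
        = Coprod.inl (CoprodI.of
            (M := fun o : Option ι => ((o.elim Q H : Subgroup G) : Type _)) (i := none)
            (⟨hh.1, hh.2.1⟩ : Q)) from rfl, rdPiHom_h, rdPiFam_none_apply, rdSigmaHom_q]
    | some i =>
      erw [show RelAlphabet.toFree
          (Sum.inr ⟨some i, hh⟩ : RelAlphabet X (fun o : Option ι => o.elim Q H))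
        = Coprod.inl (CoprodI.of
            (M := fun o : Option ι => ((o.elim Q H : Subgroup G) : Type _)) (i := some i)
            (⟨hh.1, hh.2.1⟩ : H i)) from rfl, rdPiHom_h, rdPiFam_some_apply, rdSigmaHom_h]

theorem rdSigma_pi_word (H : ι → Subgroup G) (X Y : Set G) (Q : Subgroup G)
    (hYX : Y ⊆ X) (hYQ : Y ⊆ (Q : Set G))
    (W : List (RelAlphabet X (fun o : Option ι => o.elim Q H))) :
    ∃ m ≤ W.length, ConjProdLE (rdTSet H X Y Q hYX hYQ)
      ((rdSigmaHom H X Y Q (rdPiHom H X Y Q hYQ (wordToFree W)))⁻¹ * wordToFree W) m := by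
  induction W with
  | nil =>
    refine ⟨0, le_refl 0, ?_⟩
    have h1 : wordToFree ([] : List (RelAlphabet X (fun o : Option ι => o.elim Q H))) = 1 := by
      simp [wordToFree]
    rw [h1]
    simpa using rdConjProdLE_one _
  | cons a t ih =>
    obtain ⟨m, hm, hC⟩ := ih
    have hcons : wordToFree (a :: t) = RelAlphabet.toFree a * wordToFree t := by
      simp [wordToFree]
    set u := rdSigmaHom H X Y Q (rdPiHom H X Y Q hYQ (wordToFree t)) with hu
    set la := RelAlphabet.toFree a with hla
    set sa := rdSigmaHom H X Y Q (rdPiHom H X Y Q hYQ la) with hsa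
    have hval : (rdSigmaHom H X Y Q (rdPiHom H X Y Q hYQ (wordToFree (a :: t))))⁻¹ *
        wordToFree (a :: t)
        = (u⁻¹ * (sa⁻¹ * la) * u) * (u⁻¹ * wordToFree t) := by
      rw [hcons, map_mul, map_mul]
      rw [← hu, ← hsa]
      group
    rcases rdSigma_pi_letter H X Y Q hYX hYQ a with h | h
    · refine ⟨m, le_trans hm (Nat.le_succ _), ?_⟩
      have h1 : (u⁻¹ * (sa⁻¹ * la) * u) * (u⁻¹ * wordToFree t) = u⁻¹ * wordToFree t := by
        rw [show sa = la from h]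
        group
      rw [hval, h1]
      exact hC
    · refine ⟨m + 1, by simpa using Nat.succ_le_succ hm, ?_⟩
      rw [hval]
      exact rdConjProdLE_cons u _ h rfl hC

end OptionAux
/-- **Lemma.** Let `G` have a finite relative presentation `⟨X, H_λ | 𝓡⟩` with respect
to `{H_λ}`, and let `Q ≤ G` be generated by a finite set `Y ⊆ X`. If there is `κ > 0`
such that every primitive word `W` over `𝓠` representing `1` in `G` satisfies
`Area^rel_Q(W) ≤ κ‖W‖`, then every word `W` over `𝓠` representing `1` in `G` satisfies
`Area^rel_Q(W) ≤ κ‖W‖`; in particular, the relative Dehn function of `G` with respect to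
`{H_λ} ∪ {Q}` is linear, i.e. `G` is hyperbolic relative to `{H_λ} ∪ {Q}`. -/
theorem area_bound_of_primitive_area_bound
    (H : ι → Subgroup G) (X : Set G) (hXfin : X.Finite)
    (hXsym : ∀ x ∈ X, x⁻¹ ∈ X) (hsur : Function.Surjective (relEval X H))
    (R : Set (RelFree X H)) (hRfin : R.Finite)
    (hker : (relEval X H).ker = Subgroup.normalClosure R)
    (Q : Subgroup G) (Y : Set G) (hYX : Y ⊆ X) (hYfin : Y.Finite)
    (hYQ : Y ⊆ (Q : Set G)) (hQgen : Subgroup.closure Y = Q)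
    (κ : ℝ) (hκ : 0 < κ)
    (hprim : ∀ W : List (QAlphabet X H Q), IsPrimitiveWord W →
      relEvalQ X Y H Q (wordToFQ Y hYQ W) = 1 →
      ∃ k : ℕ, (k : ℝ) ≤ κ * W.length ∧
        ConjProdLE (⇑(epsQ X Y H Q hYQ) '' R) (wordToFQ Y hYQ W) k) :
    (∀ W : List (QAlphabet X H Q),
      relEvalQ X Y H Q (wordToFQ Y hYQ W) = 1 →
      ∃ k : ℕ, (k : ℝ) ≤ κ * W.length ∧
        ConjProdLE (⇑(epsQ X Y H Q hYQ) '' R) (wordToFQ Y hYQ W) k) ∧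
    IsRelHyperbolic (fun o : Option ι => o.elim Q H) := by
  classical
  have key : ∀ n : ℕ, ∀ W : List (QAlphabet X H Q), W.length ≤ n →
      relEvalQ X Y H Q (wordToFQ Y hYQ W) = 1 →
      ∃ k : ℕ, (k : ℝ) ≤ κ * W.length ∧
        ConjProdLE (⇑(epsQ X Y H Q hYQ) '' R) (wordToFQ Y hYQ W) k := by
    intro n
    induction n with
    | zero =>
      intro W hW _
      obtain rfl : W = [] := List.length_eq_zero_iff.mp (Nat.le_zero.mp hW)
      refine ⟨0, by simp, ?_⟩
      have h1 : wordToFQ Y hYQ ([] : List (QAlphabet X H Q)) = 1 := by simp [wordToFQ]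
      rw [h1]
      exact rdConjProdLE_one _
    | succ n ih =>
      intro W hW h1
      by_cases hp : IsPrimitiveWord W
      · exact hprim W hp h1
      · obtain ⟨W₁, W₂, W₃, q₁, q₂, hWeq, hQmem⟩ := not_not.mp hp
        have hq1 : QAlphabet.toFQ Y hYQ (Sum.inr q₁) =
            rdQEmb X Y H Q ⟨q₁.1, q₁.2.1⟩ := rfl
        have hq2 : QAlphabet.toFQ Y hYQ (Sum.inr q₂) =
            rdQEmb X Y H Q ⟨q₂.1, q₂.2.1⟩ := rfl
        set qQ : Q := ⟨(W₂.map QAlphabet.toG).prod, hQmem⟩ with hqQ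
        have hval : wordToFQ Y hYQ W = wordToFQ Y hYQ W₁ * rdQEmb X Y H Q ⟨q₁.1, q₁.2.1⟩ *
            wordToFQ Y hYQ W₂ * rdQEmb X Y H Q ⟨q₂.1, q₂.2.1⟩ * wordToFQ Y hYQ W₃ := by
          rw [hWeq, rdWordToFQ_append, rdWordToFQ_append, rdWordToFQ_append, rdWordToFQ_append,
            rdWordToFQ_singleton, rdWordToFQ_singleton, hq1, hq2]
        have hlen : W.length = W₁.length + W₂.length + W₃.length + 2 := by
          rw [hWeq]
          simp only [List.length_append, List.length_cons, List.length_nil]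
          omega
        obtain ⟨V, hVlen, hVval⟩ := rdExists_q_word hYQ W₂ qQ⁻¹
        obtain ⟨V₁, hV₁len, hV₁val⟩ :=
          rdExists_q_word hYQ W₁ (⟨q₁.1, q₁.2.1⟩ * qQ * ⟨q₂.1, q₂.2.1⟩)
        have hW'val : wordToFQ Y hYQ (V₁ ++ W₃) = wordToFQ Y hYQ W₁ *
            rdQEmb X Y H Q (⟨q₁.1, q₁.2.1⟩ * qQ * ⟨q₂.1, q₂.2.1⟩) * wordToFQ Y hYQ W₃ := by
          rw [rdWordToFQ_append, hV₁val]
        have hγV : relEvalQ X Y H Q (wordToFQ Y hYQ V) = 1 := by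
          rw [hVval, map_mul, rdRelEvalQ_wordToFQ, rdRelEvalQ_qEmb]
          rw [show ((qQ⁻¹ : Q) : G) = ((W₂.map QAlphabet.toG).prod)⁻¹ from rfl]
          exact mul_inv_cancel _
        have hγW' : relEvalQ X Y H Q (wordToFQ Y hYQ (V₁ ++ W₃)) = 1 := by
          have h0 := h1
          rw [hval] at h0
          simp only [map_mul, rdRelEvalQ_qEmb] at h0
          rw [rdRelEvalQ_wordToFQ hYQ W₂] at h0
          rw [hW'val]
          simp only [map_mul, rdRelEvalQ_qEmb, Subgroup.coe_mul]
          simp only [mul_assoc] at h0 ⊢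
          exact h0
        have hVn : V.length ≤ n := by omega
        have hW'n : (V₁ ++ W₃).length ≤ n := by
          simp only [List.length_append]
          omega
        obtain ⟨kV, hkV, hCV⟩ := ih V hVn hγV
        obtain ⟨kW, hkW, hCW⟩ := ih (V₁ ++ W₃) hW'n hγW'
        refine ⟨kV + kW, ?_, ?_⟩
        · have e1 : (kV : ℝ) ≤ κ * ((W₂.length : ℝ) + 1) := by
            refine hkV.trans (mul_le_mul_of_nonneg_left ?_ hκ.le)
            exact_mod_cast hVlen
          have e2 : (kW : ℝ) ≤ κ * ((W₁.length : ℝ) + (W₃.length : ℝ) + 1) := by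
            refine hkW.trans (mul_le_mul_of_nonneg_left ?_ hκ.le)
            have hlen2 : (V₁ ++ W₃).length ≤ W₁.length + W₃.length + 1 := by
              simp only [List.length_append]
              omega
            exact_mod_cast hlen2
          calc ((kV + kW : ℕ) : ℝ) = (kV : ℝ) + (kW : ℝ) := by push_cast; ring
            _ ≤ κ * ((W₂.length : ℝ) + 1) + κ * ((W₁.length : ℝ) + (W₃.length : ℝ) + 1) :=
                add_le_add e1 e2
            _ = κ * (W.length : ℝ) := by rw [hlen]; push_cast; ring
        · have hdecomp : wordToFQ Y hYQ W =
              wordToFQ Y hYQ W₁ *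
                (rdQEmb X Y H Q ⟨q₁.1, q₁.2.1⟩ * wordToFQ Y hYQ V *
                  (rdQEmb X Y H Q ⟨q₁.1, q₁.2.1⟩)⁻¹) *
              (wordToFQ Y hYQ W₁)⁻¹ *
              wordToFQ Y hYQ (V₁ ++ W₃) := by
            rw [hval, hVval, hW'val]
            simp only [map_mul, map_inv]
            exact rdDecompEq (K := RelFreeQ X Y H Q) _ _ _ _ _ _
          rw [hdecomp]
          exact rdConjProdLE_mul (rdConjProdLE_conj _ (rdConjProdLE_conj _ hCV)) hCW
  have part1 : ∀ W : List (QAlphabet X H Q),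
      relEvalQ X Y H Q (wordToFQ Y hYQ W) = 1 →
      ∃ k : ℕ, (k : ℝ) ≤ κ * W.length ∧
        ConjProdLE (⇑(epsQ X Y H Q hYQ) '' R) (wordToFQ Y hYQ W) k :=
    fun W h1 => key W.length W le_rfl h1
  refine ⟨part1, X, hXfin, hXsym, ?_, ?_⟩
  · -- surjectivity of `relEval X H'`
    intro g
    obtain ⟨f, hf⟩ := hsur g
    refine ⟨rdRhoHom H X Q f, ?_⟩
    have h2 := DFunLike.congr_fun (rdEval_comp_rho H X Q) f
    simp only [MonoidHom.comp_apply] at h2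
    rw [h2, hf]
  · have hεs := rdEps_surjective H X Y Q hYX hYQ hQgen
    have hπσ : ∀ w, rdPiHom H X Y Q hYQ (rdSigmaHom H X Y Q w) = w := by
      intro w
      have h3 := DFunLike.congr_fun (rdPi_sigma H X Y Q hYQ) w
      simpa using h3
    have hπsurj : Function.Surjective (rdPiHom H X Y Q hYQ) :=
      fun w => ⟨rdSigmaHom H X Y Q w, hπσ w⟩
    have hkerQ : (relEvalQ X Y H Q).ker =
        Subgroup.normalClosure (⇑(epsQ X Y H Q hYQ) '' R) := by
      have hc : ((relEvalQ X Y H Q).comp (epsQ X Y H Q hYQ)).ker =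
          Subgroup.normalClosure R := by
        rw [rdEvalQ_comp_eps, hker]
      calc (relEvalQ X Y H Q).ker
          = (((relEvalQ X Y H Q).ker : Subgroup (RelFreeQ X Y H Q)).comap
              (epsQ X Y H Q hYQ)).map (epsQ X Y H Q hYQ) :=
            by rw [Subgroup.map_comap_eq_self_of_surjective hεs]
        _ = (Subgroup.normalClosure R).map (epsQ X Y H Q hYQ) := by
            rw [MonoidHom.comap_ker, hc]
        _ = Subgroup.normalClosure (⇑(epsQ X Y H Q hYQ) '' R) :=
            by rw [Subgroup.map_normalClosure R _ hεs]
    refine ⟨⇑(rdSigmaHom H X Y Q) '' (⇑(epsQ X Y H Q hYQ) '' R) ∪ rdTSet H X Y Q hYX hYQ,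
      ?_, ?_, ?_⟩
    · haveI := hYfin.to_subtype
      exact ((hRfin.image _).image _).union (Set.finite_range _)
    · -- the kernel is the normal closure of the relators
      have hkerEval : (relEval X (fun o : Option ι => o.elim Q H)).ker
          = Subgroup.comap (rdPiHom H X Y Q hYQ)
              ((relEvalQ X Y H Q).ker : Subgroup (RelFreeQ X Y H Q)) := by
        rw [← rdEvalQ_comp_pi H X Y Q hYQ]
        rfl
      rw [hkerEval, hkerQ]
      set NN := Subgroup.normalClosure
        (⇑(rdSigmaHom H X Y Q) '' (⇑(epsQ X Y H Q hYQ) '' R) ∪ rdTSet H X Y Q hYX hYQ) with hNN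
      apply le_antisymm
      · intro g hg
        have hg' : rdPiHom H X Y Q hYQ g ∈
            Subgroup.normalClosure (⇑(epsQ X Y H Q hYQ) '' R) := Subgroup.mem_comap.mp hg
        have hmap : Subgroup.normalClosure (⇑(epsQ X Y H Q hYQ) '' R) ≤
            NN.map (rdPiHom H X Y Q hYQ) := by
          haveI : (NN.map (N := RelFreeQ X Y H Q) (rdPiHom H X Y Q hYQ)).Normal :=
            Subgroup.Normal.map inferInstance _ hπsurj
          apply Subgroup.normalClosure_le_normal
          rintro s hs
          exact ⟨rdSigmaHom H X Y Q s,
            Subgroup.subset_normalClosure (Set.mem_union_left _ ⟨s, hs, rfl⟩), hπσ s⟩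
        obtain ⟨h, hh, hph⟩ := hmap hg'
        have hker2 : h⁻¹ * g ∈ (rdPiHom H X Y Q hYQ).ker := by
          rw [MonoidHom.mem_ker, map_mul, map_inv, hph]
          exact inv_mul_cancel _
        rw [rdKer_pi H X Y Q hYX hYQ] at hker2
        have h3 : h⁻¹ * g ∈ NN :=
          Subgroup.normalClosure_mono Set.subset_union_right hker2
        have h4 := mul_mem hh h3
        have heq := rdCancelEq h g
        rw [heq] at h4
        exact h4
      · haveI : (Subgroup.comap (rdPiHom H X Y Q hYQ)
            (Subgroup.normalClosure (⇑(epsQ X Y H Q hYQ) '' R))).Normal :=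
          Subgroup.Normal.comap inferInstance _
        apply Subgroup.normalClosure_le_normal
        rintro x (⟨s, hs, rfl⟩ | hxT)
        · have hx2 : rdPiHom H X Y Q hYQ (rdSigmaHom H X Y Q s) = s := hπσ s
          simp only [SetLike.mem_coe, Subgroup.mem_comap]
          rw [hx2]
          exact Subgroup.subset_normalClosure hs
        · simp only [SetLike.mem_coe, Subgroup.mem_comap]
          rw [rdPi_TSet H X Y Q hYX hYQ x hxT]
          exact one_mem _
    · -- the relative Dehn function is linear
      refine ⟨Nat.ceil κ + 1, ?_⟩
      intro W hW1
      have h2 := DFunLike.congr_fun (rdEvalQ_comp_pi H X Y Q hYQ) (wordToFree W)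
      simp only [MonoidHom.comp_apply] at h2
      have h1' : relEvalQ X Y H Q (wordToFQ Y hYQ (W.map (rdMapL H X Q))) = 1 := by
        rw [← rdPi_wordToFree, h2, hW1]
      obtain ⟨k, hk, hC⟩ := part1 (W.map (rdMapL H X Q)) h1'
      obtain ⟨m, hm, hCm⟩ := rdSigma_pi_word H X Y Q hYX hYQ W
      have hlenmap : (W.map (rdMapL H X Q)).length = W.length := by simp
      have hkn : k ≤ Nat.ceil κ * W.length := by
        have hr : (k : ℝ) ≤ (Nat.ceil κ : ℝ) * (W.length : ℝ) := by
          rw [hlenmap] at hk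
          refine hk.trans (mul_le_mul_of_nonneg_right (Nat.le_ceil κ) ?_)
          positivity
        exact_mod_cast hr
      refine ⟨k + m, ?_, ?_⟩
      · calc k + m ≤ Nat.ceil κ * W.length + W.length := Nat.add_le_add hkn hm
          _ = (Nat.ceil κ + 1) * W.length := by ring
          _ ≤ (Nat.ceil κ + 1) * W.length + (Nat.ceil κ + 1) := Nat.le_add_right _ _
      · have hCσ := rdConjProdLE_map (rdSigmaHom H X Y Q) hC
        rw [← rdPi_wordToFree H X Y Q hYQ W] at hCσ
        have hCσ' := rdConjProdLE_mono
          (R' := ⇑(rdSigmaHom H X Y Q) '' (⇑(epsQ X Y H Q hYQ) '' R) ∪ rdTSet H X Y Q hYX hYQ)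
          Set.subset_union_left hCσ
        have hCm' := rdConjProdLE_mono
          (R' := ⇑(rdSigmaHom H X Y Q) '' (⇑(epsQ X Y H Q hYQ) '' R) ∪ rdTSet H X Y Q hYX hYQ)
          Set.subset_union_right hCm
        have hmul := rdConjProdLE_mul hCσ' hCm'
        have heq := rdCancelEq (rdSigmaHom H X Y Q (rdPiHom H X Y Q hYQ (wordToFree W)))
          (wordToFree W)
        rw [heq] at hmul
        exact hmul


end Stmt10
end

section
/- Let G be a group hyperbolic relative to a collection of subgroups {H_λ}_{λ∈Λ}. Then every finite subgroup Q ≤ G is hyperbolically embedded into G, i.e. G is hyperbolic relative to {H_λ}_{λ∈Λ} ∪ {Q}. -/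
open Monoid

section RelHypAux

variable {G : Type*} [Group G] {ι : Type*}

section Basic
variable {X : Set G} {H : ι → Subgroup G}

lemma relEval_inr_of (x : X) : relEval X H (Coprod.inr (FreeGroup.of x)) = x := by
  rw [relEval, Coprod.lift_apply_inr, FreeGroup.lift_apply_of]

lemma relEval_inl_of {i : ι} (h : H i) :
    relEval X H (Coprod.inl (CoprodI.of h)) = (h : G) := by
  rw [relEval, Coprod.lift_apply_inl, CoprodI.lift_of]; rfl

lemma relEval_toFree (a : RelAlphabet X H) : relEval X H a.toFree = a.toG := by
  cases a with
  | inl x => exact relEval_inr_of x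
  | inr h => exact relEval_inl_of _

lemma wordToFree_cons (a : RelAlphabet X H) (W : List (RelAlphabet X H)) :
    wordToFree (a :: W) = a.toFree * wordToFree W := by
  simp [wordToFree]

lemma wordToFree_append (V W : List (RelAlphabet X H)) :
    wordToFree (V ++ W) = wordToFree V * wordToFree W := by
  simp [wordToFree]

lemma relEval_wordToFree (W : List (RelAlphabet X H)) :
    relEval X H (wordToFree W) = (W.map RelAlphabet.toG).prod := by
  rw [wordToFree, map_list_prod, List.map_map]
  congr 1; exact List.map_congr_left fun a _ => relEval_toFree a

lemma exists_word_repr (hX : ∀ x ∈ X, x⁻¹ ∈ X)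
    (hs : Function.Surjective (relEval X H)) (g : G) :
    ∃ V : List (RelAlphabet X H), (V.map RelAlphabet.toG).prod = g := by
  obtain ⟨f, rfl⟩ := hs g
  induction f using Coprod.induction_on with
  | inl m =>
    induction m using CoprodI.induction_on with
    | one => exact ⟨[], by simp⟩
    | of i h =>
      by_cases h1 : (h : G) = 1
      · refine ⟨[], by simp [relEval_inl_of, h1]⟩
      · exact ⟨[Sum.inr ⟨i, ⟨(h : G), h.2, h1⟩⟩], mul_one (h : G)⟩
    | mul x y hx hy =>
      obtain ⟨V1, hV1⟩ := hx
      obtain ⟨V2, hV2⟩ := hy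
      exact ⟨V1 ++ V2, by rw [List.map_append, List.prod_append, hV1, hV2, map_mul, map_mul]⟩
  | inr n =>
    induction n using FreeGroup.induction_on with
    | C1 => exact ⟨[], by simp⟩
    | of x =>
      refine ⟨[Sum.inl x], ?_⟩
      show (x : G) * 1 = _
      rw [mul_one]
      exact (relEval_inr_of x).symm
    | inv_of x _ =>
      refine ⟨[Sum.inl ⟨(x : G)⁻¹, hX x x.2⟩], ?_⟩
      have h2 : relEval X H (Coprod.inr (FreeGroup.of x)⁻¹) = (x : G)⁻¹ := by
        rw [map_inv, map_inv, relEval_inr_of]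
      show (x : G)⁻¹ * 1 = _
      rw [mul_one]
      exact h2.symm
    | mul x y hx hy =>
      obtain ⟨V1, hV1⟩ := hx
      obtain ⟨V2, hV2⟩ := hy
      exact ⟨V1 ++ V2, by
        rw [List.map_append, List.prod_append, hV1, hV2, map_mul, ← map_mul, ← map_mul]⟩
  | mul x y hx hy =>
    obtain ⟨V1, hV1⟩ := hx
    obtain ⟨V2, hV2⟩ := hy
    exact ⟨V1 ++ V2, by rw [List.map_append, List.prod_append, hV1, hV2, map_mul]⟩

end Basic

/-- Every element of a list is a conjugate of an element of `R`. -/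
def ConjList {K : Type*} [Group K] (R : Set K) (l : List K) : Prop :=
  ∀ x ∈ l, ∃ f r, r ∈ R ∧ x = f⁻¹ * r * f

lemma ConjList.conjProdLE {K : Type*} [Group K] {R : Set K} {l : List K}
    (h : ConjList R l) : ConjProdLE R l.prod l.length := by
  have hch : ∀ i : Fin l.length, ∃ f r, r ∈ R ∧ l.get i = f⁻¹ * r * f :=
    fun i => h (l.get i) (List.get_mem l i)
  choose f r hr hfr using hch
  refine ⟨f, r, hr, ?_⟩
  have h2 : (List.ofFn fun i => (f i)⁻¹ * r i * f i) = List.ofFn l.get := by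
    congr 1; funext i; exact (hfr i).symm
  rw [h2, List.ofFn_get]

lemma ConjList.eval_one {K K' : Type*} [Group K] [Group K'] {R : Set K} {l : List K}
    (h : ConjList R l) (φ : K →* K') (hφ : ∀ r ∈ R, φ r = 1) : φ l.prod = 1 := by
  rw [map_list_prod]
  refine List.prod_eq_one fun x hx => ?_
  obtain ⟨y, hy, rfl⟩ := List.mem_map.mp hx
  obtain ⟨f, r, hr, rfl⟩ := h y hy
  rw [map_mul, map_mul, map_inv, hφ r hr, mul_one, inv_mul_cancel]

lemma conj_list_prod {K : Type*} [Group K] (g : K) (l : List K) :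
    (l.map fun y => g * y * g⁻¹).prod = g * l.prod * g⁻¹ := by
  induction l with
  | nil => simp
  | cons a t ih => rw [List.map_cons, List.prod_cons, ih, List.prod_cons]; group

lemma ConjList.conj {K : Type*} [Group K] {R : Set K} {l : List K}
    (h : ConjList R l) (g : K) : ConjList R (l.map fun y => g * y * g⁻¹) := by
  intro x hx
  obtain ⟨y, hy, rfl⟩ := List.mem_map.mp hx
  obtain ⟨f, r, hr, rfl⟩ := h y hy
  exact ⟨f * g⁻¹, r, hr, by group⟩

lemma ConjList.append {K : Type*} [Group K] {R : Set K} {l₁ l₂ : List K}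
    (h₁ : ConjList R l₁) (h₂ : ConjList R l₂) : ConjList R (l₁ ++ l₂) := by
  intro x hx
  rcases List.mem_append.mp hx with h | h
  · exact h₁ x h
  · exact h₂ x h

lemma ConjList.map {K K' : Type*} [Group K] [Group K'] {R : Set K} {l : List K}
    (h : ConjList R l) (φ : K →* K') : ConjList (φ '' R) (l.map φ) := by
  intro x hx
  obtain ⟨y, hy, rfl⟩ := List.mem_map.mp hx
  obtain ⟨f, r, hr, rfl⟩ := h y hy
  exact ⟨φ f, φ r, ⟨r, hr, rfl⟩, by rw [map_mul, map_mul, map_inv]⟩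

lemma ConjList.mono {K : Type*} [Group K] {R R' : Set K} {l : List K}
    (h : ConjList R l) (hRR' : R ⊆ R') : ConjList R' l :=
  fun x hx => by obtain ⟨f, r, hr, rfl⟩ := h x hx; exact ⟨f, r, hRR' hr, rfl⟩

/-- Map of free products induced by `ι ↪ Option ι`. -/
def embHom (X : Set G) (H : ι → Subgroup G) (Q : Subgroup G) :
    RelFree X H →* RelFree X (fun o : Option ι => o.elim Q H) :=
  Coprod.lift
    ((Coprod.inl).comp (CoprodI.lift fun i =>
      (CoprodI.of (M := fun o : Option ι => ((o.elim Q H : Subgroup G) : Type _)) (i := some i))))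
    Coprod.inr

variable {X : Set G} {H : ι → Subgroup G} {Q : Subgroup G}

lemma embHom_inr (w : FreeGroup X) :
    embHom X H Q (Coprod.inr w) = Coprod.inr w := by
  rw [embHom, Coprod.lift_apply_inr]

lemma embHom_inl_of {i : ι} (h : H i) :
    embHom X H Q (Coprod.inl (CoprodI.of h)) =
      Coprod.inl (CoprodI.of (M := fun o : Option ι => ((o.elim Q H : Subgroup G) : Type _))
        (i := some i) h) := by
  rw [embHom, Coprod.lift_apply_inl, MonoidHom.comp_apply]; erw [CoprodI.lift_of]

lemma relEval_embHom (f : RelFree X H) :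
    relEval X (fun o : Option ι => o.elim Q H) (embHom X H Q f) = relEval X H f := by
  induction f using Coprod.induction_on with
  | inl m =>
    induction m using CoprodI.induction_on with
    | one => simp
    | of i h => rw [embHom_inl_of]; exact (relEval_inl_of (H := fun o : Option ι => o.elim Q H)
        (i := some i) h).trans (relEval_inl_of h).symm
    | mul x y hx hy => rw [map_mul, map_mul, map_mul, map_mul, hx, hy]
  | inr n => rw [embHom_inr]; rfl
  | mul x y hx hy => rw [map_mul, map_mul, hx, hy, map_mul]

lemma embHom_toFree (a : RelAlphabet X H) :
    embHom X H Q a.toFree =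
      (RelAlphabet.toFree (H := fun o : Option ι => o.elim Q H)
        (match a with
          | Sum.inl x => Sum.inl x
          | Sum.inr ⟨i, h⟩ => Sum.inr ⟨some i, h⟩)) := by
  cases a with
  | inl x => exact embHom_inr _
  | inr h => exact embHom_inl_of _

end RelHypAux

section MainAux

variable {G : Type*} [Group G] {ι : Type*} {X : Set G} {H : ι → Subgroup G} {Q : Subgroup G}

/-- The relator identifying the new letter `q ∈ Q` with a word in the old alphabet. -/
def qrelAux (X : Set G) (H : ι → Subgroup G) (Q : Subgroup G)
    (V : G → List (RelAlphabet X H)) (q : {h : G // h ∈ Q ∧ h ≠ 1}) :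
    RelFree X (fun o : Option ι => o.elim Q H) :=
  (embHom X H Q (wordToFree (V q.1)))⁻¹ *
    Coprod.inl (CoprodI.of (M := fun o : Option ι => ((Option.elim o Q H : Subgroup G) : Type _))
      (i := (none : Option ι)) ⟨q.1, q.2.1⟩)

lemma wordToFree_singleton {X : Set G} {H' : ι → Subgroup G} (a : RelAlphabet X H') :
    wordToFree [a] = a.toFree := by
  simp [wordToFree]

lemma toFree_none (q : {h : G // h ∈ Q ∧ h ≠ 1}) :
    (RelAlphabet.toFree (X := X) (H := fun o : Option ι => o.elim Q H)
        (Sum.inr ⟨none, q⟩)) =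
      Coprod.inl (CoprodI.of (M := fun o : Option ι => ((Option.elim o Q H : Subgroup G) : Type _))
        (i := (none : Option ι)) ⟨q.1, q.2.1⟩) := rfl

lemma toFree_some (i : ι) (h : {g : G // g ∈ H i ∧ g ≠ 1}) :
    (RelAlphabet.toFree (X := X) (H := fun o : Option ι => o.elim Q H)
        (Sum.inr ⟨some i, h⟩)) =
      embHom X H Q (RelAlphabet.toFree (Sum.inr ⟨i, h⟩)) :=
  (embHom_inl_of _).symm

lemma toFree_inl (x : X) :
    (RelAlphabet.toFree (X := X) (H := fun o : Option ι => o.elim Q H) (Sum.inl x)) =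
      embHom X H Q (RelAlphabet.toFree (Sum.inl x)) :=
  (embHom_inr _).symm

end MainAux

set_option maxHeartbeats 2000000 in
/-- **Theorem.** Let `G` be a group hyperbolic relative to a collection of subgroups
`{H_λ}`. Then every finite subgroup `Q ≤ G` is hyperbolically embedded into `G`,
i.e. `G` is hyperbolic relative to `{H_λ} ∪ {Q}`. -/
theorem finite_subgroup_hyperbolically_embedded {G : Type*} [Group G] {ι : Type*}
    (H : ι → Subgroup G) (hG : IsRelHyperbolic H) (Q : Subgroup G)
    (hQ : (Q : Set G).Finite) :
    IsRelHyperbolic (fun o : Option ι => o.elim Q H) := by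
  classical
  obtain ⟨X, hXfin, hXsym, hsurj, R, hRfin, hker, C, hDehn⟩ := hG
  choose V hV using fun g => exists_word_repr hXsym hsurj g
  haveI : Finite {h : G // h ∈ Q ∧ h ≠ 1} := by
    have h1 : {h : G | h ∈ Q ∧ h ≠ 1}.Finite := hQ.subset fun x hx => hx.1
    exact h1.to_subtype
  set E := embHom X H Q with hE
  set R' : Set (RelFree X (fun o : Option ι => o.elim Q H)) :=
    (E '' R) ∪ Set.range (qrelAux X H Q V) with hR'
  set N' := Subgroup.normalClosure R' with hN'
  -- all new relators evaluate to 1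
  have hold : ∀ r ∈ R, relEval X H r = 1 := fun r hr =>
    MonoidHom.mem_ker.mp (hker ▸ Subgroup.subset_normalClosure hr)
  have hq1 : ∀ q : {h : G // h ∈ Q ∧ h ≠ 1},
      relEval X (fun o : Option ι => o.elim Q H)
        (Coprod.inl (CoprodI.of
          (M := fun o : Option ι => ((Option.elim o Q H : Subgroup G) : Type _))
          (i := (none : Option ι)) ⟨q.1, q.2.1⟩)) = q.1 :=
    fun q => relEval_inl_of (H := fun o : Option ι => o.elim Q H) (i := (none : Option ι))
      (⟨q.1, q.2.1⟩ : Q)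
  have hkill : ∀ w ∈ R', relEval X (fun o : Option ι => o.elim Q H) w = 1 := by
    intro w hw
    rcases hw with ⟨r, hr, rfl⟩ | ⟨q, rfl⟩
    · rw [relEval_embHom, hold r hr]
    · rw [qrelAux, map_mul, map_inv, relEval_embHom, relEval_wordToFree, hV, hq1]
      exact inv_mul_cancel _
  -- surjectivity of the new evaluation map
  have hsurj' : Function.Surjective (relEval X (fun o : Option ι => o.elim Q H)) := by
    intro g
    obtain ⟨f, hf⟩ := hsurj g
    exact ⟨E f, by rw [hE, relEval_embHom, hf]⟩
  -- the kernel is the normal closure of R'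
  have hRN' : R' ⊆ ↑N' := Subgroup.subset_normalClosure
  haveI : N'.Normal := Subgroup.normalClosure_normal
  have hmul : ∀ (a b : RelFree X (fun o : Option ι => o.elim Q H)) (fa fb : RelFree X H),
      (E fa)⁻¹ * a ∈ N' → (E fb)⁻¹ * b ∈ N' → (E (fa * fb))⁻¹ * (a * b) ∈ N' := by
    intro a b fa fb ha hb
    have heq : (E (fa * fb))⁻¹ * (a * b) =
        ((E fb)⁻¹ * ((E fa)⁻¹ * a) * ((E fb)⁻¹)⁻¹) * ((E fb)⁻¹ * b) := by
      rw [map_mul]; group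
    rw [heq]
    exact mul_mem (Subgroup.Normal.conj_mem ‹N'.Normal› _ ha (E fb)⁻¹) hb
  have key : ∀ f' : RelFree X (fun o : Option ι => o.elim Q H), ∃ f : RelFree X H,
      relEval X H f = relEval X (fun o : Option ι => o.elim Q H) f' ∧ (E f)⁻¹ * f' ∈ N' := by
    intro f'
    induction f' using Coprod.induction_on with
    | inl m =>
      induction m using CoprodI.induction_on with
      | one =>
        refine ⟨1, by simp, ?_⟩
        have h1 : (Coprod.inl (1 : CoprodI fun o : Option ι =>
            ((Option.elim o Q H : Subgroup G) : Type _)) :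
            RelFree X (fun o : Option ι => o.elim Q H)) = 1 := map_one _
        rw [h1, map_one]
        simpa using one_mem N'
      | of o h =>
        match o with
        | some i =>
          refine ⟨Coprod.inl (CoprodI.of (M := fun i : ι => ((H i : Subgroup G) : Type _)) h),
            ?_, ?_⟩
          · exact (relEval_inl_of (H := H) (i := i) h).trans (relEval_inl_of
              (H := fun o : Option ι => o.elim Q H) (i := some i) h).symm
          · rw [hE]; erw [embHom_inl_of]
            simpa using one_mem N'
        | none =>
          by_cases hq : (h : G) = 1
          · have h1 : h = 1 := Subtype.ext hq
            subst h1
            refine ⟨1, by rw [map_one]; exact (relEval_inl_of (H := fun o : Option ι => o.elim Q H)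
              (i := (none : Option ι)) (1 : Q)).symm, ?_⟩
            have h1 : (CoprodI.of (M := fun o : Option ι =>
                ((Option.elim o Q H : Subgroup G) : Type _)) (i := (none : Option ι))
                (1 : Q)) = 1 := map_one _
            erw [h1]; rw [map_one, map_one]
            simpa using one_mem N'
          · refine ⟨wordToFree (V (h : G)), ?_, ?_⟩
            · rw [relEval_wordToFree, hV, relEval_inl_of]
            · exact hRN' (Or.inr ⟨⟨(h : G), h.2, hq⟩, rfl⟩)
      | mul x y hx hy =>
        obtain ⟨fx, hx1, hx2⟩ := hx
        obtain ⟨fy, hy1, hy2⟩ := hy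
        refine ⟨fx * fy, ?_, ?_⟩
        · rw [map_mul, hx1, hy1, ← map_mul, ← map_mul]
        · rw [map_mul Coprod.inl]
          exact hmul _ _ _ _ hx2 hy2
    | inr n =>
      induction n using FreeGroup.induction_on with
      | C1 =>
        refine ⟨1, by simp, ?_⟩
        have : (Coprod.inr (1 : FreeGroup X) :
            RelFree X (fun o : Option ι => o.elim Q H)) = 1 := map_one _
        rw [this, map_one]
        simpa using one_mem N'
      | of x =>
        refine ⟨Coprod.inr (FreeGroup.of x), rfl, ?_⟩
        show (E (Coprod.inr (FreeGroup.of x)))⁻¹ * Coprod.inr (FreeGroup.of x) ∈ N'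
        rw [hE, embHom_inr, inv_mul_cancel]
        exact one_mem N'
      | inv_of x _ =>
        refine ⟨(Coprod.inr (FreeGroup.of x))⁻¹, ?_, ?_⟩
        · show relEval X H (Coprod.inr (FreeGroup.of x))⁻¹ =
            relEval X (fun o : Option ι => o.elim Q H) (Coprod.inr (FreeGroup.of x))⁻¹
          rw [map_inv, map_inv, relEval_inr_of, relEval_inr_of]
        · show (E (Coprod.inr (FreeGroup.of x))⁻¹)⁻¹ * (Coprod.inr (FreeGroup.of x))⁻¹ ∈ N'
          rw [map_inv, hE, embHom_inr, inv_inv, mul_inv_cancel]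
          exact one_mem N'
      | mul x y hx hy =>
        obtain ⟨fx, hx1, hx2⟩ := hx
        obtain ⟨fy, hy1, hy2⟩ := hy
        refine ⟨fx * fy, ?_, ?_⟩
        · rw [map_mul, hx1, hy1, ← map_mul, ← map_mul]
        · rw [map_mul Coprod.inr]
          exact hmul _ _ _ _ hx2 hy2
    | mul x y hx hy =>
      obtain ⟨fx, hx1, hx2⟩ := hx
      obtain ⟨fy, hy1, hy2⟩ := hy
      exact ⟨fx * fy, by rw [map_mul, hx1, hy1, ← map_mul], hmul _ _ _ _ hx2 hy2⟩
  have hEN : ∀ f ∈ Subgroup.normalClosure R, E f ∈ N' := by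
    haveI : (N'.comap E).Normal := Subgroup.Normal.comap ‹N'.Normal› E
    have hle : Subgroup.normalClosure R ≤ N'.comap E :=
      Subgroup.normalClosure_le_normal fun r hr => Subgroup.mem_comap.mpr (hRN' (Or.inl ⟨r, hr, rfl⟩))
    exact fun f hf => Subgroup.mem_comap.mp (hle hf)
  have hker' : (relEval X (fun o : Option ι => o.elim Q H)).ker = N' := by
    apply le_antisymm
    · intro w hw
      obtain ⟨f, hf1, hf2⟩ := key w
      have hf3 : f ∈ Subgroup.normalClosure R := by
        rw [← hker, MonoidHom.mem_ker, hf1]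
        exact MonoidHom.mem_ker.mp hw
      have : w = E f * ((E f)⁻¹ * w) := by group
      rw [this]
      exact mul_mem (hEN f hf3) hf2
    · exact Subgroup.normalClosure_le_normal fun w hw => MonoidHom.mem_ker.mpr (hkill w hw)
  -- length bound for the representative words
  obtain ⟨L0, hL0⟩ := (Set.finite_range fun q : {h : G // h ∈ Q ∧ h ≠ 1} =>
    (V q.1).length).bddAbove
  set L := max L0 1 with hLdef
  have hL : ∀ q : {h : G // h ∈ Q ∧ h ≠ 1}, (V q.1).length ≤ L :=
    fun q => le_trans (hL0 ⟨q, rfl⟩) (le_max_left _ _)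
  have hL1 : 1 ≤ L := le_max_right _ _
  -- main rewriting lemma
  have main : ∀ W' : List (RelAlphabet X (fun o : Option ι => o.elim Q H)),
      ∃ (Vr : List (RelAlphabet X H)) (l : List (RelFree X (fun o : Option ι => o.elim Q H))),
        ConjList R' l ∧ l.length ≤ W'.length ∧ Vr.length ≤ L * W'.length ∧
        wordToFree W' = l.prod * E (wordToFree Vr) := by
    intro W'
    induction W' with
    | nil =>
      refine ⟨[], [], fun x hx => absurd hx List.not_mem_nil, by simp, by simp, ?_⟩
      show wordToFree [] = [].prod * E (wordToFree [])
      simp [wordToFree]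
    | cons a rest ih =>
      obtain ⟨Vr, l, hc, hlen, hVlen, heq⟩ := ih
      obtain ⟨V₀, l₀, hc0, hlen0, hV0, heq0⟩ :
          ∃ (V₀ : List (RelAlphabet X H))
            (l₀ : List (RelFree X (fun o : Option ι => o.elim Q H))),
            ConjList R' l₀ ∧ l₀.length ≤ 1 ∧ V₀.length ≤ L ∧
            RelAlphabet.toFree a = l₀.prod * E (wordToFree V₀) := by
        match a with
        | Sum.inl x =>
          refine ⟨[Sum.inl x], [], fun x hx => absurd hx List.not_mem_nil, by simp, hL1, ?_⟩
          rw [List.prod_nil, one_mul]; erw [wordToFree_singleton]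
          exact toFree_inl x
        | Sum.inr ⟨some i, h⟩ =>
          refine ⟨[Sum.inr ⟨i, h⟩], [], fun x hx => absurd hx List.not_mem_nil, by simp,
            hL1, ?_⟩
          rw [List.prod_nil, one_mul]; erw [wordToFree_singleton]
          exact toFree_some i h
        | Sum.inr ⟨none, q⟩ =>
          refine ⟨V q.1,
            [E (wordToFree (V q.1)) * qrelAux X H Q V q * (E (wordToFree (V q.1)))⁻¹],
            ?_, by simp, hL q, ?_⟩
          · intro x hx
            rw [List.mem_singleton] at hx
            subst hx
            exact ⟨(E (wordToFree (V q.1)))⁻¹, qrelAux X H Q V q,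
              Or.inr ⟨q, rfl⟩, by rw [inv_inv]⟩
          · erw [toFree_none]; rw [List.prod_singleton]
            erw [qrelAux]
            group
            rw [hE, zpow_neg_one, mul_inv_cancel, one_mul]
            rfl
      refine ⟨V₀ ++ Vr, l₀ ++ l.map (fun y => E (wordToFree V₀) * y * (E (wordToFree V₀))⁻¹),
        hc0.append (hc.conj _), ?_, ?_, ?_⟩
      · rw [List.length_append, List.length_map, List.length_cons]
        omega
      · rw [List.length_append, List.length_cons]
        calc V₀.length + Vr.length ≤ L + L * rest.length := Nat.add_le_add hV0 hVlen
          _ = L * (rest.length + 1) := by ring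
      · rw [wordToFree_cons, heq0, heq, wordToFree_append, map_mul, List.prod_append,
          conj_list_prod]
        group
  refine ⟨X, hXfin, hXsym, hsurj', R', ⟨(hRfin.image E).union (Set.finite_range _), hker',
    C * L + C + 1, ?_⟩⟩
  intro W' hW'
  obtain ⟨Vr, l, hc, hlen, hVlen, heq⟩ := main W'
  have hVr1 : relEval X H (wordToFree Vr) = 1 := by
    have h1 := congrArg (relEval X (fun o : Option ι => o.elim Q H)) heq
    rw [hW', map_mul, hc.eval_one _ hkill, one_mul, relEval_embHom] at h1
    exact h1.symm
  obtain ⟨k, hk, f, r, hrR, hprod⟩ := hDehn Vr hVr1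
  have hl₂c : ConjList R (List.ofFn fun i => (f i)⁻¹ * r i * f i) := by
    intro x hx
    rw [List.mem_ofFn] at hx
    obtain ⟨i, rfl⟩ := hx
    exact ⟨f i, r i, hrR i, rfl⟩
  set l₂ : List (RelFree X H) := List.ofFn fun i => (f i)⁻¹ * r i * f i with hl₂
  have htotc : ConjList R' (l ++ l₂.map E) :=
    hc.append ((hl₂c.map E).mono Set.subset_union_left)
  have htotprod : wordToFree W' = (l ++ l₂.map E).prod := by
    rw [List.prod_append, heq, hprod, map_list_prod]
  refine ⟨(l ++ l₂.map E).length, ?_, ?_⟩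
  · rw [List.length_append, List.length_map, hl₂, List.length_ofFn]
    have h1 : k ≤ C * (L * W'.length) + C :=
      le_trans hk (by exact Nat.add_le_add_right (Nat.mul_le_mul_left C hVlen) C)
    calc l.length + k ≤ W'.length + (C * (L * W'.length) + C) := Nat.add_le_add hlen h1
      _ ≤ (C * L + C + 1) * W'.length + (C * L + C + 1) := by
          have h2 : C * (L * W'.length) = C * L * W'.length := (mul_assoc _ _ _).symm
          rw [h2, Nat.add_mul, Nat.add_mul, Nat.one_mul]
          generalize C * L * W'.length = a
          generalize C * W'.length = b
          omega
  · rw [htotprod]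
    exact htotc.conjProdLE
end

section
/- Let G be a group with a finite relative presentation ⟨X, H_λ (λ∈Λ) | 𝓡⟩ with respect to a collection of subgroups {H_λ}_{λ∈Λ}, and suppose the index set Λ is infinite. Then there exists a finite subset Λ₀ ⊆ Λ such that, letting G₀ denote the subgroup of G generated by X together with all H_λ for λ ∈ Λ₀, the natural homomorphism from the free product G₀ ∗ (∗_{λ∈Λ∖Λ₀} H_λ) to G is an isomorphism. -/
open Monoid

section FPD

open Monoid

variable {G : Type*} [Group G] {ι : Type*}

/-- Generators of the sub-free-product supported on a set `s` of indices. -/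
def relGenSub (X : Set G) (H : ι → Subgroup G) (s : Set ι) : Set (RelFree X H) :=
  (Set.range fun x : X => Coprod.inr (FreeGroup.of x)) ∪
    ⋃ i ∈ s, Set.range fun h : H i => Coprod.inl (CoprodI.of h)

lemma relGenSub_mono (X : Set G) (H : ι → Subgroup G) {s t : Set ι} (h : s ⊆ t) :
    relGenSub X H s ⊆ relGenSub X H t :=
  Set.union_subset_union_right _ (Set.biUnion_subset_biUnion_left h)

lemma exists_finset_mem_relGenSub (X : Set G) (H : ι → Subgroup G) (f : RelFree X H) :
    ∃ s : Finset ι, f ∈ Subgroup.closure (relGenSub X H ↑s) := by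
  classical
  induction f using Coprod.induction_on with
  | inl m =>
    induction m using CoprodI.induction_on with
    | one =>
      exact ⟨∅, by rw [map_one]; exact Subgroup.one_mem _⟩
    | of i h =>
      refine ⟨{i}, Subgroup.subset_closure (Or.inr ?_)⟩
      exact Set.mem_biUnion (by simp) ⟨h, rfl⟩
    | mul x y hx hy =>
      obtain ⟨s, hs⟩ := hx
      obtain ⟨t, ht⟩ := hy
      refine ⟨s ∪ t, ?_⟩
      rw [map_mul]
      exact mul_mem
        (Subgroup.closure_mono (relGenSub_mono X H (by simp)) hs)
        (Subgroup.closure_mono (relGenSub_mono X H (by simp)) ht)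
  | inr n =>
    induction n using FreeGroup.induction_on with
    | C1 => exact ⟨∅, by rw [map_one]; exact Subgroup.one_mem _⟩
    | of x => exact ⟨∅, Subgroup.subset_closure (Or.inl ⟨x, rfl⟩)⟩
    | inv_of x _ =>
      refine ⟨∅, ?_⟩
      rw [map_inv]
      exact inv_mem (Subgroup.subset_closure (Or.inl ⟨x, rfl⟩))
    | mul x y hx hy =>
      obtain ⟨s, hs⟩ := hx
      obtain ⟨t, ht⟩ := hy
      refine ⟨s ∪ t, ?_⟩
      rw [map_mul]
      exact mul_mem
        (Subgroup.closure_mono (relGenSub_mono X H (by simp)) hs)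
        (Subgroup.closure_mono (relGenSub_mono X H (by simp)) ht)
  | mul x y hx hy =>
    obtain ⟨s, hs⟩ := hx
    obtain ⟨t, ht⟩ := hy
    exact ⟨s ∪ t, mul_mem
      (Subgroup.closure_mono (relGenSub_mono X H (by simp)) hs)
      (Subgroup.closure_mono (relGenSub_mono X H (by simp)) ht)⟩

end FPD

/-- **Lemma.** Let `G` have a finite relative presentation `⟨X, H_λ (λ∈Λ) | 𝓡⟩` with
respect to `{H_λ}`, with the index set `Λ` infinite. Then there exists a finite subset
`Λ₀ ⊆ Λ` such that, letting `G₀` be the subgroup of `G` generated by `X` together with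
all `H_λ`, `λ ∈ Λ₀`, the natural homomorphism `G₀ ∗ (∗_{λ∈Λ∖Λ₀} H_λ) → G` is an
isomorphism. -/
theorem free_product_decomposition {G : Type*} [Group G] {ι : Type*} [Infinite ι]
    (H : ι → Subgroup G) (X : Set G) (hXfin : X.Finite)
    (hsur : Function.Surjective (relEval X H))
    (R : Set (RelFree X H)) (hRfin : R.Finite)
    (hker : (relEval X H).ker = Subgroup.normalClosure R) :
    ∃ Λ₀ : Set ι, Λ₀.Finite ∧
      Function.Bijective
        (Monoid.Coprod.lift
          (Subgroup.closure (X ∪ ⋃ i ∈ Λ₀, (H i : Set G))).subtype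
          (Monoid.CoprodI.lift
            (fun j : {j : ι // j ∉ Λ₀} => (H j.1).subtype))) := by
  classical
  haveI := hRfin.fintype
  choose s hs using fun r : R => exists_finset_mem_relGenSub X H (r : RelFree X H)
  let Λf : Finset ι := Finset.univ.biUnion fun r : R => s r
  refine ⟨(Λf : Set ι), Λf.finite_toSet, ?_⟩
  set Λ : Set ι := (Λf : Set ι) with hΛ
  set G₀ : Subgroup G := Subgroup.closure (X ∪ ⋃ i ∈ Λ, (H i : Set G)) with hG₀
  have hXle : ∀ x ∈ X, x ∈ G₀ := fun x hx => Subgroup.subset_closure (Or.inl hx)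
  have hHle : ∀ i, i ∈ Λ → H i ≤ G₀ := fun i hi g hg =>
    Subgroup.subset_closure (Or.inr (Set.mem_biUnion hi hg))
  set φ : Coprod G₀ (CoprodI fun j : {j : ι // j ∉ Λ} => (H j.1 : Type _)) →* G :=
    Coprod.lift G₀.subtype (CoprodI.lift fun j : {j : ι // j ∉ Λ} => (H j.1).subtype) with hφ
  set ψH : ∀ i : ι, H i →* Coprod G₀ (CoprodI fun j : {j : ι // j ∉ Λ} => (H j.1 : Type _)) :=
    fun i =>
      if h : i ∈ Λ then Coprod.inl.comp (Subgroup.inclusion (hHle i h))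
      else Coprod.inr.comp (CoprodI.of (M := fun j : {j : ι // j ∉ Λ} => (H j.1 : Type _)) (i := (⟨i, h⟩ : {j : ι // j ∉ Λ}))) with hψH
  set ψ₀ : RelFree X H →* Coprod G₀ (CoprodI fun j : {j : ι // j ∉ Λ} => (H j.1 : Type _)) :=
    Coprod.lift (CoprodI.lift ψH)
      (FreeGroup.lift fun x : X => Coprod.inl (⟨(x : G), hXle x x.2⟩ : G₀)) with hψ₀
  -- key evaluation facts
  have evalX : ∀ x : X, relEval X H (Coprod.inr (FreeGroup.of x)) = (x : G) := by
    intro x; simp [relEval]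
  have evalH : ∀ (i : ι) (h : H i), relEval X H (Coprod.inl (CoprodI.of h)) = (h : G) := by
    intro i h; simp [relEval]
  have ψ₀X : ∀ x : X, ψ₀ (Coprod.inr (FreeGroup.of x)) = Coprod.inl (⟨(x : G), hXle x x.2⟩ : G₀) := by
    intro x; simp [hψ₀]
  have ψ₀H : ∀ (i : ι) (h : H i), ψ₀ (Coprod.inl (CoprodI.of h)) = ψH i h := by
    intro i h; simp [hψ₀]
  -- Fact A: on the sub-free-product supported on Λ, ψ₀ lands in `inl` and lifts relEval
  have factA : ∀ f ∈ Subgroup.closure (relGenSub X H Λ),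
      ∃ g : G₀, ψ₀ f = Coprod.inl g ∧ (g : G) = relEval X H f := by
    intro f hf
    induction hf using Subgroup.closure_induction with
    | mem x hx =>
      rcases hx with ⟨x₀, rfl⟩ | hx
      · exact ⟨⟨(x₀ : G), hXle x₀ x₀.2⟩, ψ₀X x₀, (evalX x₀).symm⟩
      · rw [Set.mem_iUnion₂] at hx
        obtain ⟨i, hi, h, rfl⟩ := hx
        refine ⟨Subgroup.inclusion (hHle i hi) h, ?_, ?_⟩
        · rw [ψ₀H i h, hψH]; simp [dif_pos hi]
        · rw [evalH i h]; rfl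
    | one => exact ⟨1, by simp, by simp⟩
    | mul x y hx hy ihx ihy =>
      obtain ⟨g₁, hg₁, hg₁'⟩ := ihx
      obtain ⟨g₂, hg₂, hg₂'⟩ := ihy
      exact ⟨g₁ * g₂, by rw [map_mul, hg₁, hg₂, map_mul],
        by rw [map_mul, ← hg₁', ← hg₂']; rfl⟩
    | inv x hx ih =>
      obtain ⟨g, hg, hg'⟩ := ih
      exact ⟨g⁻¹, by rw [map_inv, hg, map_inv],
        by rw [map_inv, ← hg']; rfl⟩
  -- each relator lies in the sub-free-product supported on Λ
  have hRmem : ∀ r ∈ R, r ∈ Subgroup.closure (relGenSub X H Λ) := by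
    intro r hr
    have hsub : (↑(s ⟨r, hr⟩) : Set ι) ⊆ Λ := by
      intro i hi
      exact Finset.mem_coe.2 (Finset.mem_biUnion.2 ⟨⟨r, hr⟩, Finset.mem_univ _, hi⟩)
    exact Subgroup.closure_mono (relGenSub_mono X H hsub) (hs ⟨r, hr⟩)
  -- kernel containment
  have hle : (relEval X H).ker ≤ ψ₀.ker := by
    rw [hker]
    refine Subgroup.normalClosure_le_normal ?_
    intro r hr
    obtain ⟨g, hg, hg'⟩ := factA r (hRmem r hr)
    have hr1 : relEval X H r = 1 := by
      have : r ∈ (relEval X H).ker := by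
        rw [hker]; exact Subgroup.subset_normalClosure hr
      exact this
    have : g = 1 := Subtype.ext (by rw [hg', hr1]; rfl)
    rw [SetLike.mem_coe, MonoidHom.mem_ker, hg, this, map_one]
  set ψ := (relEval X H).liftOfRightInverse (Function.surjInv hsur)
    (Function.rightInverse_surjInv hsur) ⟨ψ₀, hle⟩ with hψdef
  have hψ : ∀ f, ψ (relEval X H f) = ψ₀ f := fun f =>
    (relEval X H).liftOfRightInverse_comp_apply _ _ ⟨ψ₀, hle⟩ f
  -- φ ∘ ψ₀ = relEval
  have hφψ₀ : φ.comp ψ₀ = relEval X H := by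
    apply Coprod.hom_ext
    · ext i h
      show φ (ψ₀ (Coprod.inl (CoprodI.of h))) = (relEval X H) (Coprod.inl (CoprodI.of h))
      rw [ψ₀H i h, evalH i h]
      simp only [hψH]
      by_cases hi : i ∈ Λ
      · simp only [dif_pos hi, MonoidHom.comp_apply]
        rw [hφ, Coprod.lift_apply_inl]
        rfl
      · simp only [dif_neg hi, MonoidHom.comp_apply]
        rw [hφ, Coprod.lift_apply_inr, CoprodI.lift_of]
        rfl
    · apply FreeGroup.ext_hom
      intro a
      simp only [MonoidHom.comp_apply]
      rw [show (Coprod.inr (M := CoprodI fun i : ι => (H i : Type _)) (FreeGroup.of a)) =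
        Coprod.inr (FreeGroup.of a) from rfl]
      rw [ψ₀X a, evalX a, hφ]
      simp [Coprod.lift_apply_inl]
  have hφψ₀' : ∀ f, φ (ψ₀ f) = relEval X H f := fun f => DFunLike.congr_fun hφψ₀ f
  -- ψ ∘ φ = id
  have hψφ : ψ.comp φ = MonoidHom.id _ := by
    apply Coprod.hom_ext
    · ext g₀
      simp only [MonoidHom.comp_apply, MonoidHom.id_apply]
      obtain ⟨g, hg⟩ := g₀
      rw [show φ (Coprod.inl (⟨g, hg⟩ : G₀)) = g from by rw [hφ]; simp]
      induction hg using Subgroup.closure_induction with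
      | mem x hx =>
        rcases hx with hx | hx
        · have := hψ (Coprod.inr (FreeGroup.of (⟨x, hx⟩ : X)))
          rw [evalX ⟨x, hx⟩, ψ₀X ⟨x, hx⟩] at this
          rw [this]
        · rw [Set.mem_iUnion₂] at hx
          obtain ⟨i, hi, hxi⟩ := hx
          have := hψ (Coprod.inl (CoprodI.of (⟨x, hxi⟩ : H i)))
          rw [evalH i ⟨x, hxi⟩, ψ₀H i ⟨x, hxi⟩, hψH] at this
          simp only [dif_pos hi] at this
          rw [this]
          rfl
      | one => rw [map_one]; exact (map_one Coprod.inl).symm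
      | mul a b ha hb iha ihb => rw [map_mul, iha, ihb, ← map_mul]; rfl
      | inv a ha iha => rw [map_inv, iha, ← map_inv]; rfl
    · ext j h
      simp only [MonoidHom.comp_apply, MonoidHom.id_apply]
      rw [show φ (Coprod.inr (CoprodI.of (i := j) h)) = ((h : H j.1) : G) from by
        rw [hφ]; simp [Coprod.lift_apply_inr, CoprodI.lift_of]]
      have := hψ (Coprod.inl (CoprodI.of (i := j.1) h))
      rw [evalH j.1 h, ψ₀H j.1 h, hψH] at this
      simp only [dif_neg j.2] at this
      rw [this]
      rfl
  constructor
  · exact Function.LeftInverse.injective (g := ψ) fun z => DFunLike.congr_fun hψφ z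
  · intro g
    obtain ⟨f, rfl⟩ := hsur g
    exact ⟨ψ₀ f, hφψ₀' f⟩
end
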